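/- arXiv:2005.01466 — 6 statements merged into one kernel-verified Lean document; each statement's English description precedes it below -/
import Mathlib

section
/- Let D be a strongly connected balanced bipartite digraph of order 2a with a ≥ 2 satisfying d(u)+d(v) ≥ 3a+1 for every dominating pair {u,v}. If D is non-Hamiltonian, then for every vertex u ∈ V(D) there exists a vertex v ≠ u such that {u,v} is a dominating pair. -/
open Finset Function

variable {V : Type*}

/-- Out-degree of a vertex in a digraph given by arc relation `A`. -/
noncomputable def outDeg (A : V → V → Prop) (u : V) : ℕ := {v | A u v}.ncard

/-- In-degree of a vertex. -/
noncomputable def inDeg (A : V → V → Prop) (u : V) : ℕ := {v | A v u}.ncard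

/-- Degree `d(u) = d⁺(u) + d⁻(u)`. -/
noncomputable def deg (A : V → V → Prop) (u : V) : ℕ := outDeg A u + inDeg A u

/-- Strong connectedness: a directed path between every ordered pair of vertices. -/
def StronglyConnected (A : V → V → Prop) : Prop :=
  ∀ u v : V, Relation.ReflTransGen A u v

/-- `X, Y` form a bipartition of the digraph `A`. -/
def IsBipartition (A : V → V → Prop) (X Y : Set V) : Prop :=
  Disjoint X Y ∧ X ∪ Y = Set.univ ∧
    ∀ u v, A u v → (u ∈ X ∧ v ∈ Y) ∨ (u ∈ Y ∧ v ∈ X)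

/-- `{u,v}` is a dominating pair: a common out-neighbour exists. -/
def IsDominatingPair (A : V → V → Prop) (u v : V) : Prop :=
  u ≠ v ∧ ∃ w, A u w ∧ A v w

/-- `{u,v}` is a dominated pair: a common in-neighbour exists. -/
def IsDominatedPair (A : V → V → Prop) (u v : V) : Prop :=
  u ≠ v ∧ ∃ w, A w u ∧ A w v

/-- The digraph contains a directed cycle of length `l`. -/
def HasCycleOfLength (A : V → V → Prop) (l : ℕ) : Prop :=
  ∃ f : ZMod l → V, Function.Injective f ∧ ∀ i, A (f i) (f (i + 1))

/-- The digraph contains a Hamiltonian (directed) cycle. -/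
def IsHamiltonian [Fintype V] (A : V → V → Prop) : Prop :=
  ∃ f : ZMod (Fintype.card V) ≃ V, ∀ i, A (f i) (f (i + 1))

/-- The digraph is exactly one directed cycle through all its vertices. -/
def IsDirectedCycleDigraph [Fintype V] (A : V → V → Prop) : Prop :=
  ∃ f : ZMod (Fintype.card V) ≃ V, ∀ u v, A u v ↔ ∃ i, u = f i ∧ v = f (i + 1)

/-- A balanced bipartite digraph of order `2a` is bipancyclic: it has cycles of
all even lengths `2, 4, …, 2a`. -/
def Bipancyclic [Fintype V] (A : V → V → Prop) (a : ℕ) : Prop :=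
  ∀ l, 1 ≤ l → l ≤ a → HasCycleOfLength A (2 * l)

/-- A digraph is pancyclic: cycles of all lengths `2, …, n`. -/
def Pancyclic [Fintype V] (A : V → V → Prop) : Prop :=
  ∀ l, 2 ≤ l → l ≤ Fintype.card V → HasCycleOfLength A l

/-- A cycle factor: a spanning collection of vertex-disjoint directed cycles,
i.e. a permutation `σ` with `v → σ v` an arc for every `v` (in a loopless
digraph all orbits have length `≥ 2`). -/
def HasCycleFactor (A : V → V → Prop) : Prop :=
  ∃ σ : Equiv.Perm V, ∀ v, A v (σ v)

/-- `arcs(S,T) = |A[S,T]| + |A[T,S]|`. -/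
noncomputable def arcsCount (A : V → V → Prop) (S T : Set V) : ℕ :=
  {p : V × V | p.1 ∈ S ∧ p.2 ∈ T ∧ A p.1 p.2}.ncard +
  {p : V × V | p.1 ∈ T ∧ p.2 ∈ S ∧ A p.1 p.2}.ncard

lemma ham_of_unique [Fintype V] (A : V → V → Prop)
    (hV2 : 1 < Fintype.card V)
    (hsc : StronglyConnected A)
    (hout1 : ∀ v, ∃ w, A v w)
    (huniq : ∀ z p q, A p z → A q z → p = q) (hin1 : ∀ v, ∃ w, A w v) :
    IsHamiltonian A := by
  classical
  set n := Fintype.card V with hn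
  have hnpos : 0 < n := by omega
  haveI : NeZero n := ⟨by omega⟩
  haveI : Fact (1 < n) := ⟨hV2⟩
  have hne : Nonempty V := Fintype.card_pos_iff.mp hnpos
  obtain ⟨u⟩ := hne
  set g : V → V := fun z => (hin1 z).choose with hg
  have hgA : ∀ z, A (g z) z := fun z => (hin1 z).choose_spec
  have hgsurj : Function.Surjective g := by
    intro p
    obtain ⟨w, hw⟩ := hout1 p
    exact ⟨w, huniq w (g w) p (hgA w) hw⟩
  have hgbij : Function.Bijective g := hgsurj.bijective_of_finite
  set e : V ≃ V := Equiv.ofBijective g hgbij with he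
  set σ : Equiv.Perm V := e.symm with hσdef
  have hσ : ∀ v, A v (σ v) := by
    intro v
    have h1 : g (σ v) = v := e.apply_symm_apply v
    have := hgA (σ v)
    rwa [h1] at this
  have hreach : ∀ v, ∃ m : ℕ, (σ ^ m) u = v := by
    intro v
    have h := hsc u v
    induction h with
    | refl => exact ⟨0, rfl⟩
    | @tail b c hbc harc ih =>
      obtain ⟨m, hm⟩ := ih
      refine ⟨m + 1, ?_⟩
      have : σ b = c := by
        have h1 : g c = b := huniq c (g c) b (hgA c) harc
        rw [← h1]
        exact e.symm_apply_apply c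
      rw [pow_succ', Equiv.Perm.mul_apply, hm, this]
  have hsame : ∀ v, σ.SameCycle u v := by
    intro v
    obtain ⟨m, hm⟩ := hreach v
    exact ⟨(m : ℤ), by rw [zpow_natCast]; exact hm⟩
  have hco : σ.IsCycleOn ↑(Finset.univ : Finset V) := by
    constructor
    · simpa using σ.bijective.bijOn_univ
    · intro x _ y _
      exact (hsame x).symm.trans (hsame y)
  have hkey : ∀ p q : ℕ, (σ ^ p) u = (σ ^ q) u ↔ p ≡ q [MOD n] := by
    intro p q
    have := hco.pow_apply_eq_pow_apply (a := u) (by simp) (m := p) (n := q)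
    rwa [Finset.card_univ] at this
  set f : ZMod n → V := fun i => (σ ^ i.val) u with hf
  have hinj : Function.Injective f := by
    intro i j hij
    have h1 := (hkey i.val j.val).mp hij
    have hi := ZMod.val_lt i
    have hj := ZMod.val_lt j
    have h2 : i.val = j.val := by
      unfold Nat.ModEq at h1
      rwa [Nat.mod_eq_of_lt hi, Nat.mod_eq_of_lt hj] at h1
    exact ZMod.val_injective n h2
  have hbijf : Function.Bijective f :=
    (Fintype.bijective_iff_injective_and_card f).mpr ⟨hinj, by rw [ZMod.card]⟩
  refine ⟨Equiv.ofBijective f hbijf, ?_⟩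
  intro i
  show A (f i) (f (i + 1))
  have hstep : f (i + 1) = σ (f i) := by
    have h1 : (i + 1).val = (i.val + 1) % n := by
      rw [ZMod.val_add, ZMod.val_one]
    have h2 : (σ ^ ((i.val + 1) % n)) u = (σ ^ (i.val + 1)) u :=
      (hkey _ _).mpr (Nat.mod_modEq _ _)
    show (σ ^ (i+1).val) u = σ ((σ ^ i.val) u)
    rw [h1, h2, pow_succ', Equiv.Perm.mul_apply]
  rw [hstep]
  exact hσ (f i)

lemma main_ham [Fintype V] (A : V → V → Prop) (a : ℕ) (X Y : Set V)
    (ha : 2 ≤ a) (hcard : Fintype.card V = 2 * a)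
    (hbip : IsBipartition A X Y) (hX : X.ncard = a) (hY : Y.ncard = a)
    (hsc : StronglyConnected A)
    (hdeg : ∀ u v : V, IsDominatingPair A u v → 3 * a + 1 ≤ deg A u + deg A v)
    (u : V) (hu : u ∈ X)
    (hnop : ∀ v, v ≠ u → ¬ IsDominatingPair A u v) : IsHamiltonian A := by
  classical
  obtain ⟨hdisj0, hcover0, harc⟩ := hbip
  have hdisj : ∀ {v : V}, v ∈ X → v ∈ Y → False := fun hx hy => Set.disjoint_left.mp hdisj0 hx hy
  have hcover : ∀ v : V, v ∈ X ∨ v ∈ Y := fun v => by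
    have : v ∈ X ∪ Y := by rw [hcover0]; trivial
    exact this
  have harcXY : ∀ {p q : V}, A p q → p ∈ X → q ∈ Y := fun hpq hp =>
    ((harc _ _ hpq).resolve_right (fun h => hdisj hp h.1)).2
  have harcYX : ∀ {p q : V}, A p q → p ∈ Y → q ∈ X := fun hpq hp =>
    ((harc _ _ hpq).resolve_left (fun h => hdisj h.1 hp)).2
  have harcYX' : ∀ {p q : V}, A p q → q ∈ Y → p ∈ X := fun hpq hq =>
    ((harc _ _ hpq).resolve_right (fun h => hdisj h.2 hq)).1
  have harcXY' : ∀ {p q : V}, A p q → q ∈ X → p ∈ Y := fun hpq hq =>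
    ((harc _ _ hpq).resolve_left (fun h => hdisj hq h.2)).1
  have hV2 : 1 < Fintype.card V := by omega
  have hexists_ne : ∀ v : V, ∃ w, w ≠ v := Fintype.exists_ne_of_one_lt_card hV2
  have hout1 : ∀ v : V, ∃ w, A v w := by
    intro v
    obtain ⟨x, hx⟩ := hexists_ne v
    rcases (hsc v x).cases_head with h | ⟨c, hc, _⟩
    · exact absurd h.symm hx
    · exact ⟨c, hc⟩
  have hin1 : ∀ v : V, ∃ w, A w v := by
    intro v
    obtain ⟨x, hx⟩ := hexists_ne v
    rcases (hsc x v).cases_tail with h | ⟨c, _, hc⟩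
    · exact (hx h.symm).elim
    · exact ⟨c, hc⟩
  set S : Set V := {w | A u w} with hSdef
  have hSY : S ⊆ Y := fun w hw => harcXY hw hu
  have hs1 : 1 ≤ S.ncard := (Set.ncard_pos S.toFinite).mpr (hout1 u)
  have hsa : S.ncard ≤ a := by
    rw [← hY]; exact Set.ncard_le_ncard hSY Y.toFinite
  have houtX : ∀ {v : V}, v ∈ X → outDeg A v ≤ a := by
    intro v hv
    have hsub : {w | A v w} ⊆ Y := fun w hw => harcXY hw hv
    calc ({w | A v w}).ncard ≤ Y.ncard := Set.ncard_le_ncard hsub Y.toFinite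
    _ = a := hY
  have houtY : ∀ {v : V}, v ∈ Y → outDeg A v ≤ a := by
    intro v hv
    have hsub : {w | A v w} ⊆ X := fun w hw => harcYX hw hv
    calc ({w | A v w}).ncard ≤ X.ncard := Set.ncard_le_ncard hsub X.toFinite
    _ = a := hX
  have hinX : ∀ {v : V}, v ∈ X → inDeg A v ≤ a := by
    intro v hv
    have hsub : {w | A w v} ⊆ Y := fun w hw => harcXY' hw hv
    calc ({w | A w v}).ncard ≤ Y.ncard := Set.ncard_le_ncard hsub Y.toFinite
    _ = a := hY
  have hinY : ∀ {v : V}, v ∈ Y → inDeg A v ≤ a := by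
    intro v hv
    have hsub : {w | A w v} ⊆ X := fun w hw => harcYX' hw hv
    calc ({w | A w v}).ncard ≤ X.ncard := Set.ncard_le_ncard hsub X.toFinite
    _ = a := hX
  have hdeg2a : ∀ v : V, deg A v ≤ 2 * a := by
    intro v
    have e : deg A v = outDeg A v + inDeg A v := rfl
    rcases hcover v with hv | hv
    · have := houtX hv; have := hinX hv; omega
    · have := houtY hv; have := hinY hv; omega
  have hL2 : ∀ {w v : V}, A u w → A v w → v = u := by
    intro w v hw hv
    by_contra hne
    exact hnop v hne ⟨fun h => hne h.symm, w, hw, hv⟩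
  have hinS : ∀ {w : V}, A u w → inDeg A w = 1 := by
    intro w hw
    have hset : {v | A v w} = {u} :=
      Set.eq_singleton_iff_unique_mem.mpr ⟨hw, fun v hv => hL2 hw hv⟩
    show ({v | A v w}).ncard = 1
    rw [hset, Set.ncard_singleton]
  have hdegS : ∀ {w : V}, A u w → deg A w ≤ a + 1 := by
    intro w hw
    have h1 := hinS hw
    have h2 := houtY (hSY hw)
    have e : deg A w = outDeg A w + inDeg A w := rfl
    omega
  have hfull : ∀ {y : V}, y ∈ Y → 2 * a ≤ deg A y → A u y := by
    intro y hy hbig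
    have hout := houtY hy
    have hin_sub : {v | A v y} ⊆ X := fun v hv => harcYX' hv hy
    have e : deg A y = outDeg A y + inDeg A y := rfl
    have hin_ge : a ≤ inDeg A y := by omega
    have heq : {v | A v y} = X :=
      Set.eq_of_subset_of_ncard_le hin_sub (by rw [hX]; exact hin_ge) X.toFinite
    have : u ∈ {v | A v y} := by rw [heq]; exact hu
    exact this
  set c : V → V := fun v => (hout1 v).choose with hcdef
  have hc : ∀ v, A v (c v) := fun v => (hout1 v).choose_spec
  have hcInj : Set.InjOn c S := by
    intro w1 h1 w2 h2 heq
    by_contra hne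
    have hdom := hdeg w1 w2 ⟨hne, c w1, hc w1, by rw [heq]; exact hc w2⟩
    have hb1 := hdegS h1
    have hb2 := hdegS h2
    omega
  have hQ : ∀ {y : V}, y ∈ Y → ¬ A u y → outDeg A y + S.ncard ≤ a := by
    intro y hy hnS
    have hdisj2 : Disjoint (c '' S) {x | A y x} := by
      rw [Set.disjoint_left]
      rintro x ⟨w, hwS, rfl⟩ hyx
      have hwy : w ≠ y := fun h => hnS (h ▸ hwS)
      have hdom := hdeg w y ⟨hwy, c w, hc w, hyx⟩
      have h1 := hdegS hwS
      have h2 : 2 * a ≤ deg A y := by omega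
      exact hnS (hfull hy h2)
    have hsub : c '' S ∪ {x | A y x} ⊆ X := by
      rintro x (⟨w, hwS, rfl⟩ | hx)
      · exact harcYX (hc w) (hSY hwS)
      · exact harcYX hx hy
    have h1 : (c '' S ∪ {x | A y x}).ncard ≤ a := by
      rw [← hX]; exact Set.ncard_le_ncard hsub X.toFinite
    rw [Set.ncard_union_eq hdisj2 (Set.toFinite _) (Set.toFinite _),
      Set.ncard_image_of_injOn hcInj] at h1
    have e : outDeg A y = {x | A y x}.ncard := rfl
    omega
  have hXu : (X \ {u}).ncard = a - 1 := by
    rw [Set.ncard_diff_singleton_of_mem hu, hX]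
  have hP1 : ∀ {y y' : V}, y ∈ Y → y' ∈ Y → y ≠ y' → (∃ x, A y x ∧ A y' x) →
      ¬ A u y ∧ a + S.ncard + 2 ≤ deg A y := by
    intro y y' hy hy' hne hw
    have hdom := hdeg y y' ⟨hne, hw⟩
    have hnuy : ¬ A u y := by
      intro hAy
      have h1 := hdegS hAy
      have h2 : 2 * a ≤ deg A y' := by omega
      have h3 := hfull hy' h2
      have h4 := hdegS h3
      omega
    have hnuy' : ¬ A u y' := by
      intro hAy'
      have h1 := hdegS hAy'
      have h2 : 2 * a ≤ deg A y := by omega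
      have h3 := hfull hy h2
      have h4 := hdegS h3
      omega
    have hout' := hQ hy' hnuy'
    have hin' : inDeg A y' ≤ a - 1 := by
      have hsub : {v | A v y'} ⊆ X \ {u} := by
        intro v hv
        refine ⟨harcYX' hv hy', ?_⟩
        intro h
        rw [Set.mem_singleton_iff] at h
        subst h
        exact hnuy' hv
      calc ({v | A v y'}).ncard ≤ (X \ {u}).ncard := Set.ncard_le_ncard hsub (Set.toFinite _)
      _ = a - 1 := hXu
    have e1 : deg A y' = outDeg A y' + inDeg A y' := rfl
    exact ⟨hnuy, by omega⟩
  have houtb : ∀ {v : V}, v ∈ X → v ≠ u → outDeg A v + S.ncard ≤ a := by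
    intro v hv hvne
    have hdisj2 : Disjoint S {y | A v y} :=
      Set.disjoint_left.mpr (fun y hyS hyv => hnop v hvne ⟨fun h => hvne h.symm, y, hyS, hyv⟩)
    have hsub : S ∪ {y | A v y} ⊆ Y :=
      Set.union_subset hSY (fun y hy => harcXY hy hv)
    have h1 : (S ∪ {y | A v y}).ncard ≤ a := by
      rw [← hY]; exact Set.ncard_le_ncard hsub Y.toFinite
    rw [Set.ncard_union_eq hdisj2 S.toFinite (Set.toFinite _)] at h1
    have e : outDeg A v = {y | A v y}.ncard := rfl
    omega
  have hfedIn : ∀ {x w0 : V}, x ∈ X → A u w0 → A w0 x → inDeg A x = 1 := by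
    intro x w0 hx hw0S hw0x
    have hset : {v | A v x} = {w0} := by
      apply Set.eq_singleton_iff_unique_mem.mpr
      refine ⟨hw0x, fun v hv => ?_⟩
      by_contra hvne
      have hvY : v ∈ Y := harcXY' hv hx
      have hw0Y : w0 ∈ Y := hSY hw0S
      exact (hP1 hw0Y hvY (fun h => hvne h.symm) ⟨x, hw0x, hv⟩).1 hw0S
    show ({v | A v x}).ncard = 1
    rw [hset, Set.ncard_singleton]
  have hP2 : ∀ {x x' : V}, x ∈ X → x' ∈ X → x ≠ x' → (∃ z, A x z ∧ A x' z) →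
      a + 2 * S.ncard + 1 ≤ deg A x := by
    intro x x' hx hx' hne hw
    have hxu : x ≠ u := by
      rintro rfl
      exact hnop x' hne.symm ⟨hne, hw⟩
    have hx'u : x' ≠ u := by
      rintro rfl
      obtain ⟨z, hz1, hz2⟩ := hw
      exact hnop x hne ⟨hne.symm, z, hz2, hz1⟩
    have hdom := hdeg x x' ⟨hne, hw⟩
    have hob := houtb hx' hx'u
    have e1 : deg A x' = outDeg A x' + inDeg A x' := rfl
    by_cases hfed : ∃ w0, A u w0 ∧ A w0 x'
    · obtain ⟨w0, hw0S, hw0x⟩ := hfed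
      have hin1' := hfedIn hx' hw0S hw0x
      have h2a := hdeg2a x
      omega
    · push_neg at hfed
      have hdisj2 : Disjoint S {v | A v x'} :=
        Set.disjoint_left.mpr (fun w hwS hwx => hfed w hwS hwx)
      have hsub : S ∪ {v | A v x'} ⊆ Y :=
        Set.union_subset hSY (fun v hv => harcXY' hv hx')
      have h1 : (S ∪ {v | A v x'}).ncard ≤ a := by
        rw [← hY]; exact Set.ncard_le_ncard hsub Y.toFinite
      rw [Set.ncard_union_eq hdisj2 S.toFinite (Set.toFinite _)] at h1
      have e2 : inDeg A x' = {v | A v x'}.ncard := rfl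
      omega
  set HX : Set V := {x | x ∈ X ∧ a + 2 * S.ncard + 1 ≤ deg A x} with hHX
  set HY : Set V := {y | y ∈ Y ∧ a + S.ncard + 2 ≤ deg A y} with hHY
  have hunotHX : u ∉ HX := by
    intro h
    obtain ⟨_, hb⟩ := h
    have e1 : deg A u = outDeg A u + inDeg A u := rfl
    have e2 : outDeg A u = S.ncard := rfl
    have e3 := hinX hu
    omega
  have hpick : ∀ (s0 : Set V) (v : V), 2 ≤ s0.ncard → v ∈ s0 → ∃ v', v' ∈ s0 ∧ v' ≠ v := by
    intro s0 v h2 hv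
    by_contra hcon
    push_neg at hcon
    have hsub : s0 ⊆ {v} := fun z hz => hcon z hz
    have hle := Set.ncard_le_ncard hsub (Set.finite_singleton v)
    rw [Set.ncard_singleton] at hle
    omega
  have hC2 : ∀ {x v : V}, x ∈ HX → A v x → v ∈ HY := by
    intro x v hxH hvx
    obtain ⟨hxX, hxb⟩ := hxH
    have hxu : x ≠ u := by
      rintro rfl
      exact hunotHX ⟨hxX, hxb⟩
    have hob := houtb hxX hxu
    have e1 : deg A x = outDeg A x + inDeg A x := rfl
    have hnf : ¬ ∃ w0, A u w0 ∧ A w0 x := by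
      rintro ⟨w0, hw0S, hw0x⟩
      have h1 := hfedIn hxX hw0S hw0x
      omega
    have hinb2 : 2 ≤ inDeg A x := by omega
    obtain ⟨v', hv'mem, hv'ne⟩ := hpick {q | A q x} v hinb2 hvx
    have hvY : v ∈ Y := harcXY' hvx hxX
    have hv'Y : v' ∈ Y := harcXY' hv'mem hxX
    have := hP1 hvY hv'Y hv'ne.symm ⟨x, hvx, hv'mem⟩
    exact ⟨hvY, this.2⟩
  have hC3 : ∀ {y v : V}, y ∈ HY → A v y → v ∈ HX := by
    intro y v hyH hvy
    obtain ⟨hyY, hyb⟩ := hyH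
    have hnuy : ¬ A u y := by
      intro hA
      have := hdegS hA
      omega
    have hob := hQ hyY hnuy
    have e1 : deg A y = outDeg A y + inDeg A y := rfl
    have hinb2 : 2 ≤ inDeg A y := by omega
    obtain ⟨v', hv'mem, hv'ne⟩ := hpick {q | A q y} v hinb2 hvy
    have hvX : v ∈ X := harcYX' hvy hyY
    have hv'X : v' ∈ X := harcYX' hv'mem hyY
    exact ⟨hvX, hP2 hvX hv'X (Ne.symm hv'ne) ⟨y, hvy, hv'mem⟩⟩
  have hC4 : ∀ v : V, v ∉ HX ∧ v ∉ HY := by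
    intro v
    have h := hsc u v
    induction h with
    | refl => exact ⟨hunotHX, fun h => hdisj hu h.1⟩
    | @tail b cc hb harc2 ih =>
      constructor
      · intro hcH
        exact ih.2 (hC2 hcH harc2)
      · intro hcH
        exact ih.1 (hC3 hcH harc2)
  have huniq : ∀ z p q : V, A p z → A q z → p = q := by
    intro z p q hp hq
    by_contra hne
    rcases hcover z with hz | hz
    · have hpY : p ∈ Y := harcXY' hp hz
      have hqY : q ∈ Y := harcXY' hq hz
      have := (hP1 hpY hqY hne ⟨z, hp, hq⟩).2
      exact (hC4 p).2 ⟨hpY, this⟩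
    · have hpX : p ∈ X := harcYX' hp hz
      have hqX : q ∈ X := harcYX' hq hz
      have := hP2 hpX hqX hne ⟨z, hp, hq⟩
      exact (hC4 p).1 ⟨hpX, this⟩
  exact ham_of_unique A hV2 hsc hout1 huniq hin1

/-- in a non-Hamiltonian such digraph every vertex belongs to a dominating pair. -/
theorem stmt_4 {V : Type*} [Fintype V] (A : V → V → Prop) (a : ℕ) (X Y : Set V)
    (ha : 2 ≤ a) (hcard : Fintype.card V = 2 * a)
    (hbip : IsBipartition A X Y) (hX : X.ncard = a) (hY : Y.ncard = a)
    (hsc : StronglyConnected A)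
    (hdeg : ∀ u v : V, IsDominatingPair A u v → 3 * a + 1 ≤ deg A u + deg A v)
    (hnh : ¬ IsHamiltonian A) :
    ∀ u : V, ∃ v : V, v ≠ u ∧ IsDominatingPair A u v := by
  intro u
  by_contra hcon
  push_neg at hcon
  have hu : u ∈ X ∨ u ∈ Y := by
    have : u ∈ X ∪ Y := by rw [hbip.2.1]; trivial
    exact this
  rcases hu with hu | hu
  · exact hnh (main_ham A a X Y ha hcard hbip hX hY hsc hdeg u hu hcon)
  · have hbip' : IsBipartition A Y X :=
      ⟨hbip.1.symm, by rw [Set.union_comm]; exact hbip.2.1,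
        fun p q h => (hbip.2.2 p q h).symm⟩
    exact hnh (main_ham A a Y X ha hcard hbip' hY hX hsc hdeg u hu hcon)
end

section
/- Let D be a strongly connected balanced bipartite digraph of order 2a with a ≥ 2 satisfying d(u)+d(v) ≥ 3a+1 for every dominating pair {u,v}. If D is non-Hamiltonian, then d(u) ≥ a+1 for every vertex u of D. -/
open Finset Function

variable {V : Type*}

/-- in a non-Hamiltonian such digraph every vertex has degree `≥ a+1`. -/
lemma bip_symm {A : V → V → Prop} {X Y : Set V} (h : IsBipartition A X Y) :
    IsBipartition A Y X :=
  ⟨h.1.symm, by rw [Set.union_comm]; exact h.2.1, fun u v huv => (h.2.2 u v huv).symm⟩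

lemma out_subset {A : V → V → Prop} {X Y : Set V} (h : IsBipartition A X Y)
    {v : V} (hv : v ∈ X) : {w | A v w} ⊆ Y := by
  intro w hw
  rcases h.2.2 v w hw with ⟨_, h2⟩ | ⟨h1, _⟩
  · exact h2
  · exact (Set.disjoint_left.1 h.1 hv h1).elim

lemma in_subset {A : V → V → Prop} {X Y : Set V} (h : IsBipartition A X Y)
    {v : V} (hv : v ∈ X) : {w | A w v} ⊆ Y := by
  intro w hw
  rcases h.2.2 w v hw with ⟨_, h2⟩ | ⟨h1, _⟩
  · exact (Set.disjoint_left.1 h.1 hv h2).elim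
  · exact h1

lemma deg_le_of_mem [Fintype V] {A : V → V → Prop} {X Y : Set V} {a : ℕ}
    (h : IsBipartition A X Y) (hY : Y.ncard = a) {v : V} (hv : v ∈ X) :
    deg A v ≤ 2 * a := by
  have h1 : outDeg A v ≤ a := hY ▸ Set.ncard_le_ncard (out_subset h hv) (Set.toFinite _)
  have h2 : inDeg A v ≤ a := hY ▸ Set.ncard_le_ncard (in_subset h hv) (Set.toFinite _)
  simp only [deg]; omega

lemma deg_le_two_mul [Fintype V] {A : V → V → Prop} {X Y : Set V} {a : ℕ}
    (h : IsBipartition A X Y) (hX : X.ncard = a) (hY : Y.ncard = a) (v : V) :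
    deg A v ≤ 2 * a := by
  have hv : v ∈ X ∪ Y := h.2.1 ▸ Set.mem_univ v
  rcases hv with hv | hv
  · exact deg_le_of_mem h hY hv
  · exact deg_le_of_mem (bip_symm h) hX hv

/-- Step D: degree ≤ a propagates along arcs. -/
lemma stepD [Fintype V] {A : V → V → Prop} {X Y : Set V} {a : ℕ}
    (ha : 2 ≤ a) (hbip : IsBipartition A X Y) (hX : X.ncard = a) (hY : Y.ncard = a)
    (hdeg : ∀ u v : V, IsDominatingPair A u v → 3 * a + 1 ≤ deg A u + deg A v)
    (hout : ∀ v : V, ∃ w, A v w) (hin : ∀ v : V, ∃ w, A w v)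
    {p w : V} (hp : p ∈ X) (hpw : A p w) (hdp : deg A p ≤ a) :
    deg A w ≤ a := by
  by_contra hcon
  push_neg at hcon
  have hwY : w ∈ Y := out_subset hbip hp hpw
  -- in-neighbourhood of w is exactly {p}
  have hinw : {q | A q w} = {p} := by
    apply Set.eq_singleton_iff_unique_mem.2
    refine ⟨hpw, fun q hq => ?_⟩
    by_contra hne
    have h31 := hdeg p q ⟨fun h => hne h.symm, w, hpw, hq⟩
    have hq2 := deg_le_two_mul hbip hX hY q
    omega
  have hindw : inDeg A w = 1 := by
    simp only [inDeg, hinw, Set.ncard_singleton]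
  have houtle : outDeg A w ≤ a :=
    hX ▸ Set.ncard_le_ncard (out_subset (bip_symm hbip) hwY) (Set.toFinite _)
  have hdw : deg A w = a + 1 := by simp only [deg] at hcon ⊢; omega
  -- w points to all of X
  have houtw : {z | A w z} = X := by
    apply Set.eq_of_subset_of_ncard_le (out_subset (bip_symm hbip) hwY)
    have : outDeg A w = a := by simp only [deg] at hdw; omega
    rw [hX]; rw [outDeg] at this; omega
  -- then p points to all of Y
  have key : ∀ y ∈ Y, A p y := by
    intro y hy
    by_cases hyw : y = w
    · exact hyw ▸ hpw
    · obtain ⟨z, hz⟩ := hout y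
      have hzX : z ∈ X := out_subset (bip_symm hbip) hy hz
      have hwz : A w z := by rw [Set.ext_iff] at houtw; exact (houtw z).2 hzX
      have h31 := hdeg w y ⟨fun h => hyw h.symm, z, hwz, hz⟩
      have hoy : outDeg A y ≤ a :=
        hX ▸ Set.ncard_le_ncard (out_subset (bip_symm hbip) hy) (Set.toFinite _)
      have hiy : inDeg A y ≤ a :=
        hX ▸ Set.ncard_le_ncard (in_subset (bip_symm hbip) hy) (Set.toFinite _)
      have hiny : inDeg A y = a := by simp only [deg] at h31; omega
      have hinyX : {q | A q y} = X := by
        apply Set.eq_of_subset_of_ncard_le (in_subset (bip_symm hbip) hy)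
        rw [hX]; rw [inDeg] at hiny; omega
      show y ∈ {z | A p z}
      have : p ∈ {q | A q y} := by rw [hinyX]; exact hp
      exact this
  have h1 : Y ⊆ {z | A p z} := fun y hy => key y hy
  have h2 : a ≤ outDeg A p := hY ▸ Set.ncard_le_ncard h1 (Set.toFinite _)
  obtain ⟨q, hq⟩ := hin p
  have h3 : 1 ≤ inDeg A p := by
    rw [inDeg]
    exact (Set.ncard_pos (Set.toFinite _)).2 ⟨q, hq⟩
  simp only [deg] at hdp; omega

theorem stmt_5 {V : Type*} [Fintype V] (A : V → V → Prop) (a : ℕ) (X Y : Set V)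
    (ha : 2 ≤ a) (hcard : Fintype.card V = 2 * a)
    (hbip : IsBipartition A X Y) (hX : X.ncard = a) (hY : Y.ncard = a)
    (hsc : StronglyConnected A)
    (hdeg : ∀ u v : V, IsDominatingPair A u v → 3 * a + 1 ≤ deg A u + deg A v)
    (hnh : ¬ IsHamiltonian A) :
    ∀ u : V, a + 1 ≤ deg A u := by
  classical
  intro u
  by_contra hcon
  push_neg at hcon
  have hdu : deg A u ≤ a := by omega
  have hcard2 : 1 < Fintype.card V := by omega
  -- every vertex has an out-neighbour and an in-neighbour
  have hout : ∀ v : V, ∃ w, A v w := by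
    intro v
    obtain ⟨v', hne⟩ := Fintype.exists_ne_of_one_lt_card hcard2 v
    rcases (hsc v v').cases_head with h | ⟨w, hw, _⟩
    · exact absurd h.symm hne
    · exact ⟨w, hw⟩
  have hin : ∀ v : V, ∃ w, A w v := by
    intro v
    obtain ⟨v', hne⟩ := Fintype.exists_ne_of_one_lt_card hcard2 v
    rcases (hsc v' v).cases_tail with h | ⟨c, _, hc⟩
    · exact absurd h hne.symm
    · exact ⟨c, hc⟩
  -- every vertex has degree ≤ a
  have hall : ∀ v : V, deg A v ≤ a := by
    intro v
    have h := hsc u v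
    induction h with
    | refl => exact hdu
    | tail hreach harc ih =>
        rcases hbip.2.2 _ _ harc with ⟨h1, _⟩ | ⟨h1, _⟩
        · exact stepD ha hbip hX hY hdeg hout hin h1 harc ih
        · exact stepD ha (bip_symm hbip) hY hX hdeg hout hin h1 harc ih
  -- unique in-neighbour everywhere
  have huniq : ∀ z : V, ∃! p : V, A p z := by
    intro z
    obtain ⟨p, hp⟩ := hin z
    refine ⟨p, hp, fun q hq => ?_⟩
    by_contra hne
    have h31 := hdeg q p ⟨hne, z, hq, hp⟩
    have h1 := hall q
    have h2 := hall p
    omega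
  let τ : V → V := fun z => (huniq z).choose
  have hτ1 : ∀ z, A (τ z) z := fun z => (huniq z).choose_spec.1
  have hτ2 : ∀ z p, A p z → p = τ z := fun z p h => (huniq z).choose_spec.2 p h
  have hsurj : Function.Surjective τ := by
    intro v
    obtain ⟨w, hw⟩ := hout v
    exact ⟨w, (hτ2 w v hw).symm⟩
  have hbij : Function.Bijective τ := ⟨Finite.injective_iff_surjective.mpr hsurj, hsurj⟩
  let e := Equiv.ofBijective τ hbij
  let σ := e.symm
  have harc : ∀ v, A v (σ v) := by
    intro v
    have h : τ (σ v) = v := e.apply_symm_apply v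
    have := hτ1 (σ v)
    rwa [h] at this
  have huniq2 : ∀ v w, A v w → w = σ v := by
    intro v w h
    have h1 : v = τ w := hτ2 w v h
    rw [h1]
    exact (e.symm_apply_apply w).symm
  have hreach : ∀ z z' : V, Relation.ReflTransGen A z z' → ∃ k, σ^[k] z = z' := by
    intro z z' h
    induction h with
    | refl => exact ⟨0, rfl⟩
    | tail hh ha2 ih =>
        obtain ⟨k, hk⟩ := ih
        exact ⟨k + 1, by rw [Function.iterate_succ_apply', hk]; exact (huniq2 _ _ ha2).symm⟩
  obtain ⟨k, hk⟩ := hreach (σ u) u (hsc (σ u) u)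
  have hper : σ^[k + 1] u = u := by rw [Function.iterate_succ_apply]; exact hk
  have hmem : u ∈ Function.periodicPts σ := ⟨k + 1, Nat.succ_pos k, hper⟩
  have hmpos : 0 < Function.minimalPeriod (⇑σ) u :=
    Function.minimalPeriod_pos_of_mem_periodicPts hmem
  have ginj : Function.Injective
      (fun i : Fin (Function.minimalPeriod (⇑σ) u) => σ^[(i : ℕ)] u) := by
    intro i j hij
    exact Fin.ext (Function.iterate_injOn_Iio_minimalPeriod i.isLt j.isLt hij)
  have gsurj : Function.Surjective
      (fun i : Fin (Function.minimalPeriod (⇑σ) u) => σ^[(i : ℕ)] u) := by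
    intro z
    obtain ⟨k', hk'⟩ := hreach u z (hsc u z)
    refine ⟨⟨k' % Function.minimalPeriod (⇑σ) u, Nat.mod_lt _ hmpos⟩, ?_⟩
    show σ^[k' % Function.minimalPeriod (⇑σ) u] u = z
    rw [Function.iterate_mod_minimalPeriod_eq]
    exact hk'
  have hmcard : Function.minimalPeriod (⇑σ) u = Fintype.card V := by
    have h1 := Fintype.card_le_of_injective _ ginj
    have h2 := Fintype.card_le_of_surjective _ gsurj
    simp only [Fintype.card_fin] at h1 h2
    omega
  haveI : NeZero (Fintype.card V) := ⟨by omega⟩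
  haveI : Fact (1 < Fintype.card V) := ⟨hcard2⟩
  let f : ZMod (Fintype.card V) → V := fun i => σ^[i.val] u
  have finj : Function.Injective f := by
    intro i j hij
    apply ZMod.val_injective
    have hi : i.val < Function.minimalPeriod (⇑σ) u := by rw [hmcard]; exact ZMod.val_lt i
    have hj : j.val < Function.minimalPeriod (⇑σ) u := by rw [hmcard]; exact ZMod.val_lt j
    exact Function.iterate_injOn_Iio_minimalPeriod hi hj hij
  have fbij : Function.Bijective f :=
    (Fintype.bijective_iff_injective_and_card f).mpr ⟨finj, by rw [ZMod.card]⟩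
  apply hnh
  refine ⟨Equiv.ofBijective f fbij, fun i => ?_⟩
  show A (f i) (f (i + 1))
  have h1 : f (i + 1) = σ (f i) := by
    show σ^[(i + 1).val] u = σ (σ^[i.val] u)
    rw [ZMod.val_add, ZMod.val_one]
    have h2 : ∀ t : ℕ, σ^[t % Fintype.card V] u = σ^[t] u := by
      intro t
      rw [← hmcard]
      exact Function.iterate_mod_minimalPeriod_eq
    rw [h2, Function.iterate_succ_apply']
  rw [h1]
  exact harc (f i)
end

section
/- Let D be a strongly connected balanced bipartite digraph of order 2a with a ≥ 2 satisfying d(u)+d(v) ≥ 3a+1 for every dominating pair {u,v}. Then D contains a cycle factor, i.e., a collection of vertex-disjoint directed cycles covering all vertices of D. -/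
open Finset Function

variable {V : Type*}

noncomputable def outF [Fintype V] (A : V → V → Prop) (u : V) : Finset V :=
  @Finset.filter _ (fun v => A u v) (fun v => Classical.propDecidable _) Finset.univ
noncomputable def inF [Fintype V] (A : V → V → Prop) (u : V) : Finset V :=
  @Finset.filter _ (fun v => A v u) (fun v => Classical.propDecidable _) Finset.univ
lemma mem_outF [Fintype V] {A : V → V → Prop} {u v : V} : v ∈ outF A u ↔ A u v := by simp [outF]
lemma mem_inF [Fintype V] {A : V → V → Prop} {u v : V} : v ∈ inF A u ↔ A v u := by simp [inF]
lemma outDeg_eq [Fintype V] (A : V → V → Prop) (u : V) : outDeg A u = (outF A u).card := by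
  classical
  rw [outDeg, Set.ncard_eq_toFinset_card']; congr 1; ext v; simp [mem_outF]
lemma inDeg_eq [Fintype V] (A : V → V → Prop) (u : V) : inDeg A u = (inF A u).card := by
  classical
  rw [inDeg, Set.ncard_eq_toFinset_card']; congr 1; ext v; simp [mem_inF]
lemma deg_eq [Fintype V] (A : V → V → Prop) (u : V) :
    deg A u = (outF A u).card + (inF A u).card := by rw [deg, outDeg_eq, inDeg_eq]

lemma hall_side [Fintype V] [DecidableEq V] (A : V → V → Prop) (a : ℕ) (X Y : Set V)
    (ha : 2 ≤ a) (hcard : Fintype.card V = 2 * a)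
    (hbip : IsBipartition A X Y) (hX : X.ncard = a) (hY : Y.ncard = a)
    (hsc : StronglyConnected A)
    (hdeg : ∀ u v : V, IsDominatingPair A u v → 3 * a + 1 ≤ deg A u + deg A v) :
    ∀ S : Finset V, ↑S ⊆ X → S.card ≤ (S.biUnion (outF A)).card := by
  classical
  -- basic facts
  obtain ⟨hdisj, hunion, harc⟩ := hbip
  have hXY : ∀ {u v : V}, A u v → u ∈ X → v ∈ Y := by
    intro u v h hu
    rcases harc u v h with ⟨_, hv⟩ | ⟨hu', _⟩
    · exact hv
    · exact absurd hu (Set.disjoint_right.mp hdisj hu')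
  have hYX : ∀ {u v : V}, A u v → u ∈ Y → v ∈ X := by
    intro u v h hu
    rcases harc u v h with ⟨hu', _⟩ | ⟨_, hv⟩
    · exact absurd hu' (Set.disjoint_left.mp hdisj · hu)
    · exact hv
  have hmemXY : ∀ v : V, v ∈ X ∨ v ∈ Y := by
    intro v
    have : v ∈ X ∪ Y := hunion ▸ Set.mem_univ v
    exact this
  have hnotboth : ∀ v : V, v ∈ X → v ∈ Y → False := fun v hx hy =>
    Set.disjoint_left.mp hdisj hx hy
  set Xf : Finset V := X.toFinset with hXf
  set Yf : Finset V := Y.toFinset with hYf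
  have hmemXf : ∀ v : V, v ∈ Xf ↔ v ∈ X := by intro v; simp [hXf]
  have hmemYf : ∀ v : V, v ∈ Yf ↔ v ∈ Y := by intro v; simp [hYf]
  have hXfcard : Xf.card = a := by rw [← hX, Set.ncard_eq_toFinset_card']
  have hYfcard : Yf.card = a := by rw [← hY, Set.ncard_eq_toFinset_card']
  -- degrees positive
  have hVcard : 1 < Fintype.card V := by omega
  have hout1 : ∀ u : V, (outF A u).Nonempty := by
    intro u
    obtain ⟨w, hw⟩ := Fintype.exists_ne_of_one_lt_card hVcard u
    rcases (hsc u w).cases_head with h | ⟨c, hc, _⟩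
    · exact absurd h.symm hw
    · exact ⟨c, mem_outF.mpr hc⟩
  have hin1 : ∀ u : V, (inF A u).Nonempty := by
    intro u
    obtain ⟨w, hw⟩ := Fintype.exists_ne_of_one_lt_card hVcard u
    rcases (hsc w u).cases_tail with h | ⟨c, _, hc⟩
    · exact absurd h.symm hw
    · exact ⟨c, mem_inF.mpr hc⟩
  -- generic degree bounds
  have houtY : ∀ u ∈ X, outF A u ⊆ Yf := by
    intro u hu v hv
    exact (hmemYf v).mpr (hXY (mem_outF.mp hv) hu)
  have hinY : ∀ u ∈ X, inF A u ⊆ Yf := by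
    intro u hu v hv
    have := mem_inF.mp hv
    rcases hmemXY v with hx | hy
    · exact absurd (hXY this hx) (hnotboth u hu)
    · exact (hmemYf v).mpr hy
  have houtX : ∀ u ∈ Y, outF A u ⊆ Xf := by
    intro u hu v hv
    exact (hmemXf v).mpr (hYX (mem_outF.mp hv) hu)
  have hinX : ∀ u ∈ Y, inF A u ⊆ Xf := by
    intro u hu v hv
    have := mem_inF.mp hv
    rcases hmemXY v with hx | hy
    · exact (hmemXf v).mpr hx
    · exact absurd (hYX this hy) fun hvX => hnotboth u hvX hu
  have hdeg2a : ∀ v : V, deg A v ≤ 2 * a := by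
    intro v
    rw [deg_eq]
    rcases hmemXY v with hx | hy
    · have h1 := card_le_card (houtY v hx)
      have h2 := card_le_card (hinY v hx)
      omega
    · have h1 := card_le_card (houtX v hy)
      have h2 := card_le_card (hinX v hy)
      omega
  -- minimal counterexample
  by_contra hcon
  push_neg at hcon
  obtain ⟨S₀, hS₀X, hS₀⟩ := hcon
  set C : Finset (Finset V) :=
    Finset.univ.filter (fun S => ↑S ⊆ X ∧ (S.biUnion (outF A)).card < S.card) with hC
  have hmemC : ∀ S : Finset V, S ∈ C ↔ (↑S ⊆ X ∧ (S.biUnion (outF A)).card < S.card) := by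
    intro S; simp [hC]
  obtain ⟨S, hSC, hmin⟩ := C.exists_min_image card ⟨S₀, (hmemC S₀).mpr ⟨hS₀X, hS₀⟩⟩
  obtain ⟨hSX, hviol⟩ := (hmemC S).mp hSC
  set R : Finset V := S.biUnion (outF A) with hR
  set k := R.card with hk
  set s := S.card with hs
  have hSXf : S ⊆ Xf := fun v hv => (hmemXf v).mpr (hSX hv)
  have hsa : s ≤ a := hXfcard ▸ card_le_card hSXf
  have hRY : R ⊆ Yf := by
    intro w hw
    obtain ⟨u, hu, hw'⟩ := mem_biUnion.mp hw
    exact houtY u (hSX hu) hw'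
  have hka : k ≤ a := hYfcard ▸ card_le_card hRY
  -- k ≥ 1, s ≥ 2
  have hSne : S.Nonempty := card_pos.mp (by omega)
  have hRne : R.Nonempty := by
    obtain ⟨u, hu⟩ := hSne
    obtain ⟨w, hw⟩ := hout1 u
    exact ⟨w, mem_biUnion.mpr ⟨u, hu, hw⟩⟩
  have hk1 : 1 ≤ k := card_pos.mpr hRne
  have hs2 : 2 ≤ s := by omega
  -- every w ∈ R has two distinct in-neighbours in S
  have htwoin : ∀ w ∈ R, ∃ u ∈ S, ∃ v ∈ S, u ≠ v ∧ A u w ∧ A v w := by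
    intro w hw
    obtain ⟨u, hu, hw'⟩ := mem_biUnion.mp hw
    have hAuw : A u w := mem_outF.mp hw'
    by_contra hno
    push_neg at hno
    have huniq : ∀ v ∈ S, A v w → v = u := by
      intro v hv hAv
      by_contra hne
      exact (hno u hu v hv (Ne.symm hne) hAuw) hAv
    -- S.erase u is a smaller violating set
    have hsub : (S.erase u).biUnion (outF A) ⊆ R.erase w := by
      intro w' hw'
      obtain ⟨u', hu', hw''⟩ := mem_biUnion.mp hw'
      refine mem_erase.mpr ⟨?_, mem_biUnion.mpr ⟨u', mem_of_mem_erase hu', hw''⟩⟩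
      intro hww
      subst hww
      exact (mem_erase.mp hu').1 (huniq u' (mem_of_mem_erase hu') (mem_outF.mp hw''))
    have hcard1 : ((S.erase u).biUnion (outF A)).card ≤ k - 1 := by
      have := card_le_card hsub
      have := card_erase_of_mem hw
      omega
    have hcard2 : (S.erase u).card = s - 1 := card_erase_of_mem hu
    have hmemC' : S.erase u ∈ C := (hmemC _).mpr ⟨fun v hv => hSX (mem_of_mem_erase hv), by omega⟩
    have := hmin _ hmemC'
    omega
  -- degree bound on S
  have hdegS : ∀ u ∈ S, deg A u ≤ k + a := by
    intro u hu
    rw [deg_eq]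
    have h1 : outF A u ⊆ R := subset_biUnion_of_mem (outF A) hu
    have h2 := card_le_card (hinY u (hSX hu))
    have := card_le_card h1
    omega
  -- dominating pair in S gives a + 1 ≤ 2k and a + 3 ≤ 2s
  have hak : a + 1 ≤ 2 * k := by
    obtain ⟨w, hw⟩ := hRne
    obtain ⟨u, hu, v, hv, huv, hAu, hAv⟩ := htwoin w hw
    have := hdeg u v ⟨huv, w, hAu, hAv⟩
    have := hdegS u hu
    have := hdegS v hv
    omega
  have has : a + 3 ≤ 2 * s := by omega
  -- T = Yf \ R
  set T : Finset V := Yf \ R with hT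
  have hTcard : T.card = a - k := by
    rw [hT, card_sdiff_of_subset hRY, hYfcard]
  have hTY : ∀ t ∈ T, t ∈ Y := fun t ht => (hmemYf t).mp (mem_sdiff.mp ht).1
  have hTne : T.Nonempty := card_pos.mp (by omega)
  -- in-neighbours of T avoid S
  have hinT : ∀ t ∈ T, inF A t ⊆ Xf \ S := by
    intro t ht x hx
    have hAxt : A x t := mem_inF.mp hx
    have hxX : x ∈ X := by
      rcases hmemXY x with h | h
      · exact h
      · exact absurd (hYX hAxt h) fun hc => hnotboth t hc (hTY t ht)
    refine mem_sdiff.mpr ⟨(hmemXf x).mpr hxX, fun hxS => ?_⟩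
    exact (mem_sdiff.mp ht).2 (mem_biUnion.mpr ⟨x, hxS, mem_outF.mpr hAxt⟩)
  -- s < a
  have hsa' : s + 1 ≤ a := by
    obtain ⟨t, ht⟩ := hTne
    obtain ⟨x, hx⟩ := hin1 t
    have hx' := hinT t ht hx
    have : (Xf \ S).Nonempty := ⟨x, hx'⟩
    have h1 := card_pos.mpr this
    have h2 : (Xf \ S).card = a - s := by rw [card_sdiff_of_subset hSXf, hXfcard]
    omega
  have hdegT : ∀ t ∈ T, deg A t ≤ (outF A t).card + (a - s) := by
    intro t ht
    rw [deg_eq]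
    have := card_le_card (hinT t ht)
    have : (inF A t).card ≤ a - s := by
      have h2 : (Xf \ S).card = a - s := by rw [card_sdiff_of_subset hSXf, hXfcard]
      omega
    omega
  -- no dominating pair within T
  have hTdisj : ∀ t ∈ T, ∀ t' ∈ T, t ≠ t' → Disjoint (outF A t) (outF A t') := by
    intro t ht t' ht' hne
    rw [Finset.disjoint_left]
    intro w hw hw'
    have := hdeg t t' ⟨hne, w, mem_outF.mp hw, mem_outF.mp hw'⟩
    have h1 := hdegT t ht
    have h2 := hdegT t' ht'
    have h3 := card_le_card (houtX t (hTY t ht))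
    have h4 := card_le_card (houtX t' (hTY t' ht'))
    omega
  -- sum of out-degrees over T is at most a
  have hsumT : ∑ t ∈ T, (outF A t).card ≤ a := by
    rw [← card_biUnion (fun t ht t' ht' hne => hTdisj t ht t' ht' hne)]
    have : T.biUnion (outF A) ⊆ Xf := by
      intro x hx
      obtain ⟨t, ht, hx'⟩ := mem_biUnion.mp hx
      exact houtX t (hTY t ht) hx'
    exact hXfcard ▸ card_le_card this
  -- each t in T has out-degree ≤ s
  have houtT : ∀ t ∈ T, (outF A t).card ≤ s := by
    intro t₀ ht₀
    by_contra hbig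
    push_neg at hbig
    have hsplit : ∑ t ∈ T, (outF A t).card
        = (outF A t₀).card + ∑ t ∈ T.erase t₀, (outF A t).card := by
      rw [add_comm, Finset.sum_erase_add _ _ ht₀]
    have hone : (T.erase t₀).card ≤ ∑ t ∈ T.erase t₀, (outF A t).card := by
      calc (T.erase t₀).card = ∑ _t ∈ T.erase t₀, 1 := by simp
        _ ≤ _ := Finset.sum_le_sum (fun t _ => card_pos.mpr (hout1 t))
    have hec : (T.erase t₀).card = a - k - 1 := by
      rw [card_erase_of_mem ht₀, hTcard]
    omega
  have hdegT' : ∀ t ∈ T, deg A t ≤ a := by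
    intro t ht
    have := hdegT t ht
    have := houtT t ht
    omega
  -- Claim B: out-neighbours of T-vertices have a unique in-neighbour
  have hClaimB : ∀ t ∈ T, ∀ x, A t x → ∀ y, A y x → y = t := by
    intro t ht x hAtx y hAyx
    by_contra hne
    have := hdeg t y ⟨Ne.symm hne, x, hAtx, hAyx⟩
    have := hdegT' t ht
    have := hdeg2a y
    omega
  -- Claim C: second out-neighbours stay in T
  have hClaimC : ∀ t ∈ T, ∀ x, A t x → ∀ w, A x w → w ∈ T := by
    intro t ht x hAtx w hAxw
    have hxX : x ∈ X := by
      rcases hmemXY x with h | h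
      · exact h
      · exact absurd (hYX hAtx (hTY t ht)) fun hc => hnotboth x hc h
    have hwY : w ∈ Yf := (hmemYf w).mpr (hXY hAxw hxX)
    refine mem_sdiff.mpr ⟨hwY, fun hwR => ?_⟩
    obtain ⟨u, hu, v, hv, huv, hAu, hAv⟩ := htwoin w hwR
    -- pick an in-neighbour of w in S distinct from x
    obtain ⟨u', hu', hAu'⟩ : ∃ u' ∈ S, u' ≠ x ∧ A u' w := by
      by_cases hux : u = x
      · exact ⟨v, hv, by rw [← hux]; exact Ne.symm huv, hAv⟩
      · exact ⟨u, hu, hux, hAu⟩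
    have hpair := hdeg x u' ⟨Ne.symm hAu'.1, w, hAxw, hAu'.2⟩
    have hdx : deg A x ≤ a + 1 := by
      rw [deg_eq]
      have h1 : inF A x ⊆ {t} := by
        intro y hy
        exact mem_singleton.mpr (hClaimB t ht x hAtx y (mem_inF.mp hy))
      have h2 := card_le_card h1
      have h3 := card_le_card (houtY x hxX)
      simp at h2
      omega
    have := hdegS u' hu'
    omega
  -- Claim D: third-layer vertices have a unique in-neighbour
  have hClaimD : ∀ t ∈ T, ∀ x, A t x → ∀ w, A x w → ∀ y, A y w → y = x := by
    intro t ht x hAtx w hAxw y hAyw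
    by_contra hne
    have hpair := hdeg x y ⟨Ne.symm hne, w, hAxw, hAyw⟩
    have hdx : deg A x ≤ a := by
      rw [deg_eq]
      have h1 : inF A x ⊆ {t} := by
        intro z hz
        exact mem_singleton.mpr (hClaimB t ht x hAtx z (mem_inF.mp hz))
      have h2 := card_le_card h1
      have h3 : outF A x ⊆ T := by
        intro z hz
        exact hClaimC t ht x hAtx z (mem_outF.mp hz)
      have h4 := card_le_card h3
      simp at h2
      omega
    have := hdeg2a y
    omega
  -- the trap set M = T ∪ L
  set L : Finset V := T.biUnion (outF A) with hL
  have hLT : Disjoint L T := by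
    rw [Finset.disjoint_left]
    intro x hx hxT
    obtain ⟨t, ht, hx'⟩ := mem_biUnion.mp hx
    have hxX := houtX t (hTY t ht) hx'
    exact hnotboth x ((hmemXf x).mp hxX) (hTY x hxT)
  set M : Finset V := T ∪ L with hM
  -- successor function
  have hGex : ∀ v ∈ M, ∃ z ∈ M, A v z ∧ (v ∈ T → z ∈ L) ∧ (v ∈ L → z ∈ T) := by
    intro v hv
    rcases mem_union.mp hv with hvT | hvL
    · obtain ⟨z, hz⟩ := hout1 v
      have hzL : z ∈ L := mem_biUnion.mpr ⟨v, hvT, hz⟩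
      exact ⟨z, mem_union.mpr (Or.inr hzL), mem_outF.mp hz, fun _ => hzL,
        fun hvL => absurd hvT (Finset.disjoint_left.mp hLT hvL)⟩
    · obtain ⟨t, ht, hv'⟩ := mem_biUnion.mp hvL
      obtain ⟨z, hz⟩ := hout1 v
      have hzT : z ∈ T := hClaimC t ht v (mem_outF.mp hv') z (mem_outF.mp hz)
      exact ⟨z, mem_union.mpr (Or.inl hzT), mem_outF.mp hz,
        fun hvT => absurd hvT (Finset.disjoint_left.mp hLT hvL), fun _ => hzT⟩
  choose G hGM hGA hGTL hGLT using hGex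
  -- G is injective on M
  have hGinj : ∀ v₁, ∀ h₁ : v₁ ∈ M, ∀ v₂, ∀ h₂ : v₂ ∈ M, G v₁ h₁ = G v₂ h₂ → v₁ = v₂ := by
    intro v₁ h₁ v₂ h₂ heq
    rcases mem_union.mp h₁ with hT₁ | hL₁
    · have hzL := hGTL v₁ h₁ hT₁
      have hT₂ : v₂ ∈ T := by
        rcases mem_union.mp h₂ with h | h
        · exact h
        · exact absurd (hGLT v₂ h₂ h) (Finset.disjoint_left.mp hLT (heq ▸ hzL))
      exact (hClaimB v₁ hT₁ (G v₁ h₁) (hGA v₁ h₁) v₂ (heq ▸ hGA v₂ h₂)).symm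
    · have hzT := hGLT v₁ h₁ hL₁
      have hL₂ : v₂ ∈ L := by
        rcases mem_union.mp h₂ with h | h
        · exact absurd hzT (Finset.disjoint_left.mp hLT (heq ▸ hGTL v₂ h₂ h))
        · exact h
      obtain ⟨t, ht, hv'⟩ := mem_biUnion.mp hL₁
      exact (hClaimD t ht v₁ (mem_outF.mp hv') (G v₁ h₁) (hGA v₁ h₁) v₂
        (heq ▸ hGA v₂ h₂)).symm
  -- G is surjective onto M
  have hGsurj : ∀ m ∈ M, ∃ v, ∃ hv : v ∈ M, G v hv = m := by
    have hsub : M.attach.image (fun p => G p.1 p.2) ⊆ M := by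
      intro z hz
      obtain ⟨p, _, hp⟩ := mem_image.mp hz
      exact hp ▸ hGM p.1 p.2
    have hinj : Set.InjOn (fun p : {v // v ∈ M} => G p.1 p.2) M.attach := by
      intro p _ q _ h
      exact Subtype.ext (hGinj p.1 p.2 q.1 q.2 h)
    have hcard : (M.attach.image (fun p => G p.1 p.2)).card = M.card := by
      rw [Finset.card_image_of_injOn hinj, card_attach]
    have heq : M.attach.image (fun p => G p.1 p.2) = M :=
      Finset.eq_of_subset_of_card_le hsub (le_of_eq hcard.symm)
    intro m hm
    obtain ⟨p, _, hp⟩ := mem_image.mp (heq ▸ hm)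
    exact ⟨p.1, p.2, hp⟩
  -- M is closed under in-neighbours
  have hclosed : ∀ m ∈ M, ∀ y, A y m → y ∈ M := by
    intro m hm y hAym
    obtain ⟨v, hv, hGv⟩ := hGsurj m hm
    rcases mem_union.mp hv with hvT | hvL
    · have : y = v := hClaimB v hvT m (hGv ▸ hGA v hv) y hAym
      exact this ▸ hv
    · obtain ⟨t, ht, hv'⟩ := mem_biUnion.mp hvL
      have : y = v := hClaimD t ht v (mem_outF.mp hv') m (hGv ▸ hGA v hv) y hAym
      exact this ▸ hv
  -- reachability contradiction
  obtain ⟨u, hu⟩ := hSne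
  obtain ⟨t₀, ht₀⟩ := hTne
  have hreach : ∀ m : V, Relation.ReflTransGen A u m → m ∈ M → u ∈ M := by
    intro m h
    induction h with
    | refl => exact id
    | tail _ hbc ih => exact fun hc => ih (hclosed _ hc _ hbc)
  have huM : u ∈ M := hreach t₀ (hsc u t₀) (mem_union.mpr (Or.inl ht₀))
  rcases mem_union.mp huM with huT | huL
  · exact hnotboth u (hSX hu) (hTY u huT)
  · obtain ⟨t, ht, hu'⟩ := mem_biUnion.mp huL
    obtain ⟨w, hw⟩ := hout1 u
    have hwT : w ∈ T := hClaimC t ht u (mem_outF.mp hu') w (mem_outF.mp hw)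
    have hwR : w ∈ R := mem_biUnion.mpr ⟨u, hu, hw⟩
    exact (mem_sdiff.mp hwT).2 hwR

lemma matching_side [Fintype V] [DecidableEq V] (A : V → V → Prop) (a : ℕ) (X Y : Set V)
    (ha : 2 ≤ a) (hcard : Fintype.card V = 2 * a)
    (hbip : IsBipartition A X Y) (hX : X.ncard = a) (hY : Y.ncard = a)
    (hsc : StronglyConnected A)
    (hdeg : ∀ u v : V, IsDominatingPair A u v → 3 * a + 1 ≤ deg A u + deg A v) :
    ∃ f : X → Y, Function.Bijective f ∧ ∀ x : X, A x (f x) := by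
  classical
  have hhall := hall_side A a X Y ha hcard hbip hX hY hsc hdeg
  have hcond : ∀ s : Finset X, s.card ≤ (s.biUnion (fun x => outF A x)).card := by
    intro s
    have h1 : (s.image (Subtype.val)).card = s.card :=
      card_image_of_injective s Subtype.val_injective
    have h2 : ↑(s.image (Subtype.val : X → V)) ⊆ X := by
      intro v hv
      simp only [coe_image, Set.mem_image] at hv
      obtain ⟨x, _, rfl⟩ := hv
      exact x.2
    have h3 := hhall _ h2
    have h4 : (s.image (Subtype.val : X → V)).biUnion (outF A)
        = s.biUnion (fun x => outF A x) := by
      ext v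
      simp [mem_biUnion]
    rw [h4, h1] at h3
    exact h3
  obtain ⟨f, hfinj, hf⟩ := (Finset.all_card_le_biUnion_card_iff_exists_injective _).mp hcond
  have hfY : ∀ x : X, f x ∈ Y := by
    intro x
    have hA : A x (f x) := mem_outF.mp (hf x)
    rcases hbip.2.2 _ _ hA with ⟨_, h⟩ | ⟨h, _⟩
    · exact h
    · exact absurd h (Set.disjoint_left.mp hbip.1 x.2)
  refine ⟨fun x => ⟨f x, hfY x⟩, ?_, fun x => mem_outF.mp (hf x)⟩
  rw [Fintype.bijective_iff_injective_and_card]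
  constructor
  · intro x y h
    exact hfinj (congrArg Subtype.val h)
  · have : X.ncard = Fintype.card X := by
      rw [Set.ncard_eq_toFinset_card', Set.toFinset_card]
    have : Y.ncard = Fintype.card Y := by
      rw [Set.ncard_eq_toFinset_card', Set.toFinset_card]
    omega

theorem stmt_6_aux {V : Type*} [Fintype V] (A : V → V → Prop) (a : ℕ) (X Y : Set V)
    (ha : 2 ≤ a) (hcard : Fintype.card V = 2 * a)
    (hbip : IsBipartition A X Y) (hX : X.ncard = a) (hY : Y.ncard = a)
    (hsc : StronglyConnected A)
    (hdeg : ∀ u v : V, IsDominatingPair A u v → 3 * a + 1 ≤ deg A u + deg A v) :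
    HasCycleFactor A := by
  classical
  have hbip' : IsBipartition A Y X :=
    ⟨hbip.1.symm, by rw [Set.union_comm]; exact hbip.2.1,
      fun u v h => (hbip.2.2 u v h).symm⟩
  obtain ⟨f, hfbij, hfA⟩ := matching_side A a X Y ha hcard hbip hX hY hsc hdeg
  obtain ⟨g, hgbij, hgA⟩ := matching_side A a Y X ha hcard hbip' hY hX hsc hdeg
  have hmem : ∀ v : V, v ∉ X → v ∈ Y := by
    intro v hv
    have : v ∈ X ∪ Y := hbip.2.1 ▸ Set.mem_univ v
    exact this.resolve_left hv
  set h : V → V := fun v =>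
    if hv : v ∈ X then (f ⟨v, hv⟩ : V) else (g ⟨v, hmem v hv⟩ : V) with hh
  have hA : ∀ v, A v (h v) := by
    intro v
    by_cases hv : v ∈ X
    · simp only [hh, dif_pos hv]; exact hfA ⟨v, hv⟩
    · simp only [hh, dif_neg hv]; exact hgA ⟨v, hmem v hv⟩
  have hinj : Function.Injective h := by
    intro v₁ v₂ heq
    by_cases h₁ : v₁ ∈ X <;> by_cases h₂ : v₂ ∈ X
    · simp only [hh, dif_pos h₁, dif_pos h₂] at heq
      exact congrArg Subtype.val (hfbij.1 (Subtype.ext heq))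
    · simp only [hh, dif_pos h₁, dif_neg h₂] at heq
      have hY' : (g ⟨v₂, hmem v₂ h₂⟩ : V) ∈ Y := heq ▸ (f ⟨v₁, h₁⟩).2
      exact absurd hY' (Set.disjoint_left.mp hbip.1 (g ⟨v₂, hmem v₂ h₂⟩).2)
    · simp only [hh, dif_neg h₁, dif_pos h₂] at heq
      have hY' : (g ⟨v₁, hmem v₁ h₁⟩ : V) ∈ Y := heq ▸ (f ⟨v₂, h₂⟩).2
      exact absurd hY' (Set.disjoint_left.mp hbip.1 (g ⟨v₁, hmem v₁ h₁⟩).2)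
    · simp only [hh, dif_neg h₁, dif_neg h₂] at heq
      exact congrArg Subtype.val (hgbij.1 (Subtype.ext heq))
  exact ⟨Equiv.ofBijective h (Finite.injective_iff_bijective.mp hinj), hA⟩

/-- such a digraph contains a cycle factor. -/
theorem stmt_6 {V : Type*} [Fintype V] (A : V → V → Prop) (a : ℕ) (X Y : Set V)
    (ha : 2 ≤ a) (hcard : Fintype.card V = 2 * a)
    (hbip : IsBipartition A X Y) (hX : X.ncard = a) (hY : Y.ncard = a)
    (hsc : StronglyConnected A)
    (hdeg : ∀ u v : V, IsDominatingPair A u v → 3 * a + 1 ≤ deg A u + deg A v) :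
    HasCycleFactor A :=
  stmt_6_aux A a X Y ha hcard hbip hX hY hsc hdeg
end

section
/- Let D be a non-Hamiltonian balanced bipartite digraph of order 2a possessing a cycle factor, and let {C₁,…,C_l} be a cycle factor with the minimal number l of cycles. Then the number of arcs between V(C₁) and V(D)∖V(C₁) (in both directions combined) is at most |C₁|(2a−|C₁|)/2. -/
open Finset Function

variable {V : Type*}

section Aux

open Equiv Equiv.Perm

variable [Fintype V] [DecidableEq V]

private lemma sameCycle_helper {m c : Equiv.Perm V} {w b : V} (hc : c.IsCycle)
    (hw : w ∈ c.support)
    (hm : ∀ z ∈ c.support, z ≠ w → m z = c z) (hb : m b = c w) :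
    ∀ y ∈ c.support, m.SameCycle b y := by
  have key : ∀ i : ℕ, m.SameCycle b ((c ^ (i + 1)) w) := by
    intro i
    induction i with
    | zero => exact ⟨1, by simp [hb]⟩
    | succ n ih =>
      have hz : (c ^ (n + 1)) w ∈ c.support := by
        rwa [Equiv.Perm.pow_apply_mem_support]
      have hstep : (c ^ (n + 1 + 1)) w = c ((c ^ (n + 1)) w) := by
        rw [pow_succ', Equiv.Perm.mul_apply]
      by_cases hzw : (c ^ (n + 1)) w = w
      · rw [hstep, hzw]
        exact ⟨1, by simp [hb]⟩
      · rw [hstep, ← hm _ hz hzw]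
        exact ih.trans ⟨1, by simp⟩
  intro y hy
  have hscy : c.SameCycle w y :=
    hc.exists_zpow_eq (Finset.mem_coe.mpr hw |> fun h => Equiv.Perm.mem_support.mp hw)
      (Equiv.Perm.mem_support.mp hy)
  obtain ⟨i, hipos, _, hiy⟩ := hscy.exists_pow_eq''
  obtain ⟨j, rfl⟩ := Nat.exists_eq_add_of_lt hipos
  rw [zero_add] at hiy
  exact hiy ▸ key j

private lemma merge_lemma {σ c₁ c₂ : Equiv.Perm V}
    (h₁ : c₁ ∈ σ.cycleFactorsFinset) (h₂ : c₂ ∈ σ.cycleFactorsFinset) (hne : c₁ ≠ c₂)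
    {u v : V} (hu : u ∈ c₁.support) (hv : v ∈ c₂.support) :
    (σ * Equiv.swap u v).cycleFactorsFinset.card < σ.cycleFactorsFinset.card := by
  have hd12 : c₁.Disjoint c₂ := σ.cycleFactorsFinset_pairwise_disjoint h₁ h₂ hne
  have hsupd : _root_.Disjoint c₁.support c₂.support :=
    Equiv.Perm.disjoint_iff_disjoint_support.mp hd12
  have hu2 : u ∉ c₂.support := Finset.disjoint_left.mp hsupd hu
  have hv1 : v ∉ c₁.support := Finset.disjoint_right.mp hsupd hv
  have huv : u ≠ v := fun h => hv1 (h ▸ hu)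
  have hc₁ : c₁.IsCycle := (Equiv.Perm.mem_cycleFactorsFinset_iff.mp h₁).1
  have hc₂ : c₂.IsCycle := (Equiv.Perm.mem_cycleFactorsFinset_iff.mp h₂).1
  set m : Equiv.Perm V := c₂ * c₁ * Equiv.swap u v with hm
  have m_c1 : ∀ z ∈ c₁.support, z ≠ u → m z = c₁ z := by
    intro z hz hzu
    have hzv : z ≠ v := fun h => hv1 (h ▸ hz)
    have h1 : c₁ z ∈ c₁.support := Equiv.Perm.apply_mem_support.mpr hz
    have h2 : c₁ z ∉ c₂.support := Finset.disjoint_left.mp hsupd h1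
    simp [hm, Equiv.Perm.mul_apply, Equiv.swap_apply_of_ne_of_ne hzu hzv,
      Equiv.Perm.notMem_support.mp h2]
  have m_c2 : ∀ z ∈ c₂.support, z ≠ v → m z = c₂ z := by
    intro z hz hzv
    have hzu : z ≠ u := fun h => hu2 (h ▸ hz)
    have h1 : z ∉ c₁.support := Finset.disjoint_right.mp hsupd hz
    simp [hm, Equiv.Perm.mul_apply, Equiv.swap_apply_of_ne_of_ne hzu hzv,
      Equiv.Perm.notMem_support.mp h1]
  have m_u : m u = c₂ v := by
    have h1 : v ∉ c₁.support := hv1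
    simp [hm, Equiv.Perm.mul_apply, Equiv.swap_apply_left,
      Equiv.Perm.notMem_support.mp h1]
  have m_v : m v = c₁ u := by
    have h1 : c₁ u ∈ c₁.support := Equiv.Perm.apply_mem_support.mpr hu
    have h2 : c₁ u ∉ c₂.support := Finset.disjoint_left.mp hsupd h1
    simp [hm, Equiv.Perm.mul_apply, Equiv.swap_apply_right,
      Equiv.Perm.notMem_support.mp h2]
  have hmsupp : m.support ⊆ c₁.support ∪ c₂.support := by
    intro z hz
    by_contra h
    simp only [Finset.mem_union, not_or] at h
    obtain ⟨h1, h2⟩ := h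
    have hzu : z ≠ u := fun h => h1 (h ▸ hu)
    have hzv : z ≠ v := fun h => h2 (h ▸ hv)
    have : m z = z := by
      simp [hm, Equiv.Perm.mul_apply, Equiv.swap_apply_of_ne_of_ne hzu hzv,
        Equiv.Perm.notMem_support.mp h1, Equiv.Perm.notMem_support.mp h2]
    exact (Equiv.Perm.mem_support.mp hz) this
  -- m is a cycle
  have part2 : ∀ y ∈ c₂.support, m.SameCycle u y := sameCycle_helper hc₂ hv m_c2 m_u
  have hmcycle : m.IsCycle := by
    refine ⟨u, ?_, ?_⟩
    · rw [m_u]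
      intro h
      exact hu2 (h ▸ Equiv.Perm.apply_mem_support.mpr hv)
    · intro y hy
      have hy' : y ∈ c₁.support ∪ c₂.support := hmsupp (Equiv.Perm.mem_support.mpr hy)
      rcases Finset.mem_union.mp hy' with h | h
      · exact (part2 v hv).trans (sameCycle_helper hc₁ hu m_c1 m_v y h)
      · exact part2 y h
  -- decomposition
  have h₂' : c₂ ∈ (σ * c₁⁻¹).cycleFactorsFinset := by
    rw [Equiv.Perm.cycleFactorsFinset_mul_inv_mem_eq_sdiff h₁]
    exact Finset.mem_sdiff.mpr ⟨h₂, by simp [Ne.symm hne]⟩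
  set ρ : Equiv.Perm V := σ * c₁⁻¹ * c₂⁻¹ with hρdef
  have hρfac : ρ.cycleFactorsFinset = (σ.cycleFactorsFinset \ {c₁}) \ {c₂} := by
    rw [hρdef, Equiv.Perm.cycleFactorsFinset_mul_inv_mem_eq_sdiff h₂',
      Equiv.Perm.cycleFactorsFinset_mul_inv_mem_eq_sdiff h₁]
  have hτ : σ * Equiv.swap u v = ρ * m := by
    rw [hρdef, hm]; group
  have hd1 : (σ * c₁⁻¹).Disjoint c₁ := Equiv.Perm.disjoint_mul_inv_of_mem_cycleFactorsFinset h₁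
  have hd2 : ρ.Disjoint c₂ := Equiv.Perm.disjoint_mul_inv_of_mem_cycleFactorsFinset h₂'
  have hd3 : ρ.Disjoint c₁ := by
    have : (c₂⁻¹).Disjoint c₁ := by
      intro x
      rcases hd12.symm x with h | h
      · left; rw [Equiv.Perm.inv_eq_iff_eq]; exact h.symm
      · right; exact h
    exact hd1.mul_left this
  have hdisj : ρ.Disjoint m := by
    rw [Equiv.Perm.disjoint_iff_disjoint_support]
    refine Finset.disjoint_of_subset_right hmsupp ?_
    rw [Finset.disjoint_union_right]
    exact ⟨Equiv.Perm.disjoint_iff_disjoint_support.mp hd3,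
      Equiv.Perm.disjoint_iff_disjoint_support.mp hd2⟩
  have hfacτ : (σ * Equiv.swap u v).cycleFactorsFinset = ρ.cycleFactorsFinset ∪ {m} := by
    rw [hτ, hdisj.cycleFactorsFinset_mul_eq_union, hmcycle.cycleFactorsFinset_eq_singleton]
  have hcard2 : 2 ≤ σ.cycleFactorsFinset.card :=
    Finset.one_lt_card.mpr ⟨c₁, h₁, c₂, h₂, hne⟩
  have hcardρ : ρ.cycleFactorsFinset.card = σ.cycleFactorsFinset.card - 2 := by
    rw [hρfac, Finset.sdiff_singleton_eq_erase, Finset.sdiff_singleton_eq_erase,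
      Finset.card_erase_of_mem (Finset.mem_erase.mpr ⟨Ne.symm hne, h₂⟩),
      Finset.card_erase_of_mem h₁]
    omega
  calc (σ * Equiv.swap u v).cycleFactorsFinset.card
      ≤ ρ.cycleFactorsFinset.card + 1 := by
        rw [hfacτ]
        exact le_trans (Finset.card_union_le _ _) (by simp)
    _ < σ.cycleFactorsFinset.card := by omega

private lemma ncard_sprod (s t : Set V) : (s ×ˢ t).ncard = s.ncard * t.ncard := by
  rw [← Nat.card_coe_set_eq, ← Nat.card_coe_set_eq, ← Nat.card_coe_set_eq,
    Nat.card_congr (Equiv.Set.prod s t), Nat.card_prod]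

end Aux

/-- bound on the number of arcs between a cycle of a minimal cycle
factor and the rest of the digraph (stated as `2·arcs ≤ |C₁|(2a−|C₁|)`). -/
theorem stmt_8 {V : Type*} [Fintype V] [DecidableEq V] (A : V → V → Prop) (a : ℕ)
    (X Y : Set V) (hcard : Fintype.card V = 2 * a)
    (hbip : IsBipartition A X Y) (hX : X.ncard = a) (hY : Y.ncard = a)
    (hnh : ¬ IsHamiltonian A)
    (σ : Equiv.Perm V) (hσ : ∀ v, A v (σ v))
    (hmin : ∀ τ : Equiv.Perm V, (∀ v, A v (τ v)) →
      σ.cycleFactorsFinset.card ≤ τ.cycleFactorsFinset.card)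
    (c : Equiv.Perm V) (hc : c ∈ σ.cycleFactorsFinset) :
    2 * arcsCount A (↑c.support : Set V) ((↑c.support : Set V)ᶜ) ≤
      c.support.card * (2 * a - c.support.card) := by
  obtain ⟨hdisjXY, hunion, harcs⟩ := hbip
  -- every vertex lies in X or Y
  have hXY : ∀ w : V, w ∈ X ∨ w ∈ Y := by
    intro w
    have : w ∈ X ∪ Y := hunion ▸ Set.mem_univ w
    exact this
  -- σ has no fixed points
  have hno : ∀ w : V, σ w ≠ w := by
    intro w h
    rcases harcs w (σ w) (hσ w) with ⟨h1, h2⟩ | ⟨h1, h2⟩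
    · exact Set.disjoint_left.mp hdisjXY h1 (h ▸ h2)
    · exact Set.disjoint_left.mp hdisjXY (h ▸ h2) h1
  -- σ swaps the colour classes
  have hcol : ∀ w : V, (w ∈ X → σ w ∈ Y) ∧ (w ∈ Y → σ w ∈ X) := by
    intro w
    rcases harcs w (σ w) (hσ w) with ⟨h1, h2⟩ | ⟨h1, h2⟩
    · exact ⟨fun _ => h2, fun hw => absurd hw (Set.disjoint_left.mp hdisjXY h1)⟩
    · exact ⟨fun hw => absurd h1 (Set.disjoint_left.mp hdisjXY hw), fun _ => h2⟩
  -- σ preserves the support of c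
  have hSmem : ∀ x ∈ c.support, σ x ∈ c.support := by
    intro x hx
    have hcx : c x = σ x := (Equiv.Perm.mem_cycleFactorsFinset_iff.mp hc).2 x hx
    exact hcx ▸ Equiv.Perm.apply_mem_support.mpr hx
  have himg : c.support.image σ = c.support := by
    apply Finset.eq_of_subset_of_card_le
    · intro z hz
      obtain ⟨x, hx, rfl⟩ := Finset.mem_image.mp hz
      exact hSmem x hx
    · rw [Finset.card_image_of_injective _ σ.injective]
  have hSinv : ∀ z, σ⁻¹ z ∈ c.support ↔ z ∈ c.support := by
    intro z
    constructor
    · intro h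
      have := hSmem _ h
      simpa using this
    · intro h
      rw [← himg] at h
      obtain ⟨x, hx, hxz⟩ := Finset.mem_image.mp h
      have : σ⁻¹ z = x := by rw [← hxz]; simp
      exact this ▸ hx
  -- minimality: no double arcs x → σ y, y → σ x across the support of c
  have hkey : ∀ x ∈ c.support, ∀ y, y ∉ c.support → ¬ (A x (σ y) ∧ A y (σ x)) := by
    rintro x hx y hy ⟨hA1, hA2⟩
    have hyσ : y ∈ σ.support := Equiv.Perm.mem_support.mpr (hno y)
    have hc₂ : σ.cycleOf y ∈ σ.cycleFactorsFinset :=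
      Equiv.Perm.cycleOf_mem_cycleFactorsFinset_iff.mpr hyσ
    have hyc₂ : y ∈ (σ.cycleOf y).support := by
      rw [Equiv.Perm.mem_support_cycleOf_iff]
      exact ⟨Equiv.Perm.SameCycle.refl _ _, hyσ⟩
    have hnecc : c ≠ σ.cycleOf y := by
      intro h
      exact hy (by rw [h]; exact hyc₂)
    have hτA : ∀ w, A w ((σ * Equiv.swap x y) w) := by
      intro w
      by_cases hwx : w = x
      · subst hwx
        simpa [Equiv.Perm.mul_apply, Equiv.swap_apply_left] using hA1
      by_cases hwy : w = y
      · subst hwy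
        simpa [Equiv.Perm.mul_apply, Equiv.swap_apply_right] using hA2
      · simpa [Equiv.Perm.mul_apply, Equiv.swap_apply_of_ne_of_ne hwx hwy] using hσ w
    have h1 := hmin _ hτA
    have h2 := merge_lemma hc hc₂ hnecc hx hyc₂
    omega
  -- the counting argument
  set S : Set V := (↑c.support : Set V) with hSdef
  set T : Set V := Sᶜ with hTdef
  have hmemS : ∀ z, z ∈ S ↔ z ∈ c.support := fun z => Iff.rfl
  have hmemT : ∀ z, z ∈ T ↔ z ∉ c.support := fun z => Iff.rfl
  set B₁ : Set (V × V) := {p | p.1 ∈ S ∧ p.2 ∈ T ∧ A p.1 p.2} with hB₁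
  set B₂ : Set (V × V) := {p | p.1 ∈ T ∧ p.2 ∈ S ∧ A p.1 p.2} with hB₂
  set P₁ : Set (V × V) := {p | p.1 ∈ S ∧ p.2 ∈ T ∧ A p.1 (σ p.2)} with hP₁
  set P₂ : Set (V × V) := {p | p.1 ∈ S ∧ p.2 ∈ T ∧ A p.2 (σ p.1)} with hP₂
  have hTσ : ∀ z, σ z ∈ T ↔ z ∈ T := by
    intro z
    simp only [hmemT]
    constructor
    · intro h hz
      exact h (hSmem z hz)
    · intro h hz
      have h2 : σ⁻¹ (σ z) ∈ c.support := (hSinv (σ z)).mpr hz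
      rw [← Equiv.Perm.mul_apply, inv_mul_cancel, Equiv.Perm.one_apply] at h2
      exact h h2
  have e₁ : B₁ = (fun p : V × V => (p.1, σ p.2)) '' P₁ := by
    ext ⟨x, y⟩
    constructor
    · rintro ⟨h1, h2, h3⟩
      refine ⟨(x, σ⁻¹ y), ⟨h1, ?_, by simpa using h3⟩, by simp⟩
      have : σ (σ⁻¹ y) ∈ T := by simpa using h2
      exact (hTσ _).mp this
    · rintro ⟨⟨x', y'⟩, ⟨h1, h2, h3⟩, heq⟩
      obtain ⟨rfl, rfl⟩ : x' = x ∧ σ y' = y := by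
        simpa [Prod.ext_iff] using heq
      exact ⟨h1, (hTσ _).mpr h2, h3⟩
  have e₂ : B₂ = (fun p : V × V => (p.2, σ p.1)) '' P₂ := by
    ext ⟨x, y⟩
    constructor
    · rintro ⟨h1, h2, h3⟩
      refine ⟨(σ⁻¹ y, x), ⟨?_, h1, by simpa using h3⟩, by simp⟩
      simp only [hmemS] at h2 ⊢
      exact (hSinv y).mpr h2
    · rintro ⟨⟨x', y'⟩, ⟨h1, h2, h3⟩, heq⟩
      obtain ⟨rfl, rfl⟩ : y' = x ∧ σ x' = y := by
        simpa [Prod.ext_iff] using heq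
      refine ⟨h2, ?_, h3⟩
      simp only [hmemS] at h1 ⊢
      exact hSmem _ h1
  have hinj1 : Function.Injective (fun p : V × V => (p.1, σ p.2)) := by
    rintro ⟨a1, a2⟩ ⟨b1, b2⟩ h
    simp only [Prod.ext_iff] at h ⊢
    exact ⟨h.1, σ.injective h.2⟩
  have hinj2 : Function.Injective (fun p : V × V => (p.2, σ p.1)) := by
    rintro ⟨a1, a2⟩ ⟨b1, b2⟩ h
    simp only [Prod.ext_iff] at h ⊢
    exact ⟨σ.injective h.2, h.1⟩
  have hcard₁ : B₁.ncard = P₁.ncard := by rw [e₁, Set.ncard_image_of_injective _ hinj1]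
  have hcard₂ : B₂.ncard = P₂.ncard := by rw [e₂, Set.ncard_image_of_injective _ hinj2]
  have hdisjP : Disjoint P₁ P₂ := by
    rw [Set.disjoint_left]
    rintro ⟨x, y⟩ ⟨h1, h2, h3⟩ ⟨_, _, h6⟩
    exact hkey x ((hmemS x).mp h1) y ((hmemT y).mp h2) ⟨h3, h6⟩
  -- same-colour containment
  set Q : Set (V × V) := ((S ∩ X) ×ˢ (T ∩ X)) ∪ ((S ∩ Y) ×ˢ (T ∩ Y)) with hQ
  have hsubQ : P₁ ∪ P₂ ⊆ Q := by
    rintro ⟨x, y⟩ hp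
    have hxS : x ∈ S := by rcases hp with ⟨h1, _, _⟩ | ⟨h1, _, _⟩ <;> exact h1
    have hyT : y ∈ T := by rcases hp with ⟨_, h2, _⟩ | ⟨_, h2, _⟩ <;> exact h2
    have hcases : (x ∈ X ∧ σ y ∈ Y) ∨ (x ∈ Y ∧ σ y ∈ X) ∨
        (y ∈ X ∧ σ x ∈ Y) ∨ (y ∈ Y ∧ σ x ∈ X) := by
      rcases hp with ⟨_, _, h3⟩ | ⟨_, _, h3⟩
      · rcases harcs _ _ h3 with h | h
        · exact Or.inl ⟨h.1, h.2⟩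
        · exact Or.inr (Or.inl ⟨h.1, h.2⟩)
      · rcases harcs _ _ h3 with h | h
        · exact Or.inr (Or.inr (Or.inl ⟨h.1, h.2⟩))
        · exact Or.inr (Or.inr (Or.inr ⟨h.1, h.2⟩))
    have same : (x ∈ X ∧ y ∈ X) ∨ (x ∈ Y ∧ y ∈ Y) := by
      rcases hcases with ⟨h1, h2⟩ | ⟨h1, h2⟩ | ⟨h1, h2⟩ | ⟨h1, h2⟩
      · rcases hXY y with hy | hy
        · exact Or.inl ⟨h1, hy⟩
        · exact absurd ((hcol y).2 hy) (fun h => Set.disjoint_left.mp hdisjXY h h2)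
      · rcases hXY y with hy | hy
        · exact absurd ((hcol y).1 hy) (fun h => Set.disjoint_left.mp hdisjXY h2 h)
        · exact Or.inr ⟨h1, hy⟩
      · rcases hXY x with hx | hx
        · exact Or.inl ⟨hx, h1⟩
        · exact absurd ((hcol x).2 hx) (fun h => Set.disjoint_left.mp hdisjXY h h2)
      · rcases hXY x with hx | hx
        · exact absurd ((hcol x).1 hx) (fun h => Set.disjoint_left.mp hdisjXY h2 h)
        · exact Or.inr ⟨hx, h1⟩
    rcases same with ⟨hx, hy⟩ | ⟨hx, hy⟩
    · exact Or.inl ⟨⟨hxS, hx⟩, ⟨hyT, hy⟩⟩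
    · exact Or.inr ⟨⟨hxS, hx⟩, ⟨hyT, hy⟩⟩
  -- colour class sizes
  have hmapXY : ∀ x, x ∈ S ∩ X → σ x ∈ S ∩ Y := by
    rintro x ⟨h1, h2⟩
    exact ⟨hSmem x ((hmemS x).mp h1), (hcol x).1 h2⟩
  have hmapYX : ∀ x, x ∈ S ∩ Y → σ x ∈ S ∩ X := by
    rintro x ⟨h1, h2⟩
    exact ⟨hSmem x ((hmemS x).mp h1), (hcol x).2 h2⟩
  have hk1 : (S ∩ X).ncard ≤ (S ∩ Y).ncard := by
    have h1 : σ '' (S ∩ X) ⊆ S ∩ Y := by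
      rintro z ⟨x, hx, rfl⟩; exact hmapXY x hx
    calc (S ∩ X).ncard = (σ '' (S ∩ X)).ncard :=
          (Set.ncard_image_of_injective _ σ.injective).symm
      _ ≤ (S ∩ Y).ncard := Set.ncard_le_ncard h1 (Set.toFinite _)
  have hk2 : (S ∩ Y).ncard ≤ (S ∩ X).ncard := by
    have h1 : σ '' (S ∩ Y) ⊆ S ∩ X := by
      rintro z ⟨x, hx, rfl⟩; exact hmapYX x hx
    calc (S ∩ Y).ncard = (σ '' (S ∩ Y)).ncard :=
          (Set.ncard_image_of_injective _ σ.injective).symm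
      _ ≤ (S ∩ X).ncard := Set.ncard_le_ncard h1 (Set.toFinite _)
  set k : ℕ := (S ∩ X).ncard with hk
  have hkY : (S ∩ Y).ncard = k := le_antisymm hk2 hk1
  have hSsplit : S.ncard = 2 * k := by
    have hd : Disjoint (S ∩ X) (S ∩ Y) :=
      Set.disjoint_of_subset Set.inter_subset_right Set.inter_subset_right hdisjXY
    have hu : (S ∩ X) ∪ (S ∩ Y) = S := by
      rw [← Set.inter_union_distrib_left, hunion, Set.inter_univ]
    rw [← hu, Set.ncard_union_eq hd (Set.toFinite _) (Set.toFinite _), hkY]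
    omega
  have hXsplit : (T ∩ X).ncard = a - k ∧ k ≤ a := by
    have hd : Disjoint (S ∩ X) (T ∩ X) := by
      apply Set.disjoint_of_subset Set.inter_subset_left Set.inter_subset_left
      exact disjoint_compl_right
    have hu : (S ∩ X) ∪ (T ∩ X) = X := by
      rw [← Set.union_inter_distrib_right, hTdef, Set.union_compl_self, Set.univ_inter]
    have := Set.ncard_union_eq hd (Set.toFinite _) (Set.toFinite _)
    rw [hu, hX] at this
    omega
  have hYsplit : (T ∩ Y).ncard = a - k := by
    have hd : Disjoint (S ∩ Y) (T ∩ Y) := by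
      apply Set.disjoint_of_subset Set.inter_subset_left Set.inter_subset_left
      exact disjoint_compl_right
    have hu : (S ∩ Y) ∪ (T ∩ Y) = Y := by
      rw [← Set.union_inter_distrib_right, hTdef, Set.union_compl_self, Set.univ_inter]
    have := Set.ncard_union_eq hd (Set.toFinite _) (Set.toFinite _)
    rw [hu, hY, hkY] at this
    omega
  have hQcard : Q.ncard ≤ 2 * (k * (a - k)) := by
    have h1 : Q.ncard ≤ ((S ∩ X) ×ˢ (T ∩ X)).ncard + ((S ∩ Y) ×ˢ (T ∩ Y)).ncard := by
      rw [hQ]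
      exact Set.ncard_union_le _ _
    rw [ncard_sprod, ncard_sprod, hkY, hXsplit.1, hYsplit, ← hk] at h1
    omega
  -- put everything together
  have harc : arcsCount A S T = P₁.ncard + P₂.ncard := by
    rw [arcsCount]
    congr 1
  have hPQ : P₁.ncard + P₂.ncard ≤ Q.ncard := by
    rw [← Set.ncard_union_eq hdisjP (Set.toFinite _) (Set.toFinite _)]
    exact Set.ncard_le_ncard hsubQ (Set.toFinite _)
  have hScard : c.support.card = 2 * k := by
    rw [← Set.ncard_coe_finset, ← hSdef, hSsplit]
  have hak : k ≤ a := hXsplit.2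
  have harc' : arcsCount A S T ≤ 2 * (k * (a - k)) := by
    rw [harc]; exact le_trans hPQ hQcard
  rw [hScard]
  have h2a : 2 * a - 2 * k = 2 * (a - k) := by omega
  calc 2 * arcsCount A S T ≤ 2 * (2 * (k * (a - k))) := by omega
    _ = 2 * k * (2 * a - 2 * k) := by rw [h2a]; ring
end

section
/- Let D be a strongly connected balanced bipartite digraph of order 2a (a ≥ 3, k an integer with max{1,a/4} < k ≤ a/2) satisfying: for every dominating pair {u,v}, either d(u) ≥ 2a−k and d(v) ≥ a+k, or d(u) ≥ a+k and d(v) ≥ 2a−k. If D is Hamiltonian but not equal to a single directed cycle of length 2a, then every vertex u of D forms a dominating pair with some other vertex; in particular d(u) ≥ a+k for every vertex u. -/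
open Finset Function

variable {V : Type*}

/-- if `D` is Hamiltonian but not a single `2a`-cycle, every vertex
belongs to a dominating pair, and hence has degree `≥ a+k`. -/
theorem stmt_13 {V : Type*} [Fintype V] (A : V → V → Prop) (a k : ℕ) (X Y : Set V)
    (ha : 3 ≤ a) (hk1 : 1 < k) (hk2 : a < 4 * k) (hk3 : 2 * k ≤ a)
    (hcard : Fintype.card V = 2 * a)
    (hbip : IsBipartition A X Y) (hX : X.ncard = a) (hY : Y.ncard = a)
    (hsc : StronglyConnected A)
    (hdeg : ∀ u v : V, IsDominatingPair A u v →
      (2 * a - k ≤ deg A u ∧ a + k ≤ deg A v) ∨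
      (a + k ≤ deg A u ∧ 2 * a - k ≤ deg A v))
    (hham : IsHamiltonian A) (hnc : ¬ IsDirectedCycleDigraph A) :
    ∀ u : V, (∃ v : V, IsDominatingPair A u v) ∧ a + k ≤ deg A u := by
  classical
  obtain ⟨hdisj, huniv, harc⟩ := hbip
  have hYfin : Y.Finite := Set.toFinite Y
  have hXfin : X.Finite := Set.toFinite X
  -- out- and in-degrees are at most a
  have houtle : ∀ v : V, outDeg A v ≤ a := by
    intro v
    have hv : v ∈ X ∪ Y := by rw [huniv]; exact Set.mem_univ v
    rcases hv with hvX | hvY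
    · have hsub : {w | A v w} ⊆ Y := by
        intro w hw
        rcases harc v w hw with ⟨_, h⟩ | ⟨h1, _⟩
        · exact h
        · exact absurd rfl (hdisj.ne_of_mem hvX h1)
      calc outDeg A v ≤ Y.ncard := Set.ncard_le_ncard hsub hYfin
        _ = a := hY
    · have hsub : {w | A v w} ⊆ X := by
        intro w hw
        rcases harc v w hw with ⟨h1, _⟩ | ⟨_, h⟩
        · exact absurd rfl (hdisj.ne_of_mem h1 hvY)
        · exact h
      calc outDeg A v ≤ X.ncard := Set.ncard_le_ncard hsub hXfin
        _ = a := hX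
  have hin : ∀ v : V, a + k ≤ deg A v → k ≤ inDeg A v := by
    intro v hv
    have := houtle v
    unfold deg at hv
    omega
  haveI : NeZero (Fintype.card V) := ⟨by omega⟩
  obtain ⟨f, hf⟩ := hham
  -- there is a chord
  have h1 : ¬ ∀ u v, A u v ↔ ∃ i, u = f i ∧ v = f (i + 1) := fun h => hnc ⟨f, h⟩
  simp only [not_forall] at h1
  obtain ⟨u0, v0, huv⟩ := h1
  have hchord : ∃ i j : ZMod (Fintype.card V), A (f i) (f j) ∧ j ≠ i + 1 := by
    by_cases hA : A u0 v0
    · refine ⟨f.symm u0, f.symm v0, by simpa using hA, ?_⟩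
      intro hj
      apply huv
      constructor
      · intro _
        refine ⟨f.symm u0, (f.apply_symm_apply u0).symm, ?_⟩
        rw [← hj]
        exact (f.apply_symm_apply v0).symm
      · intro _; exact hA
    · exact absurd ⟨fun h => absurd h hA, by rintro ⟨i, rfl, rfl⟩; exact hf i⟩ huv
  obtain ⟨i, j, hij, hne⟩ := hchord
  -- the backward-propagation step
  have hstep : ∀ m : ZMod (Fintype.card V),
      a + k ≤ deg A (f m) → a + k ≤ deg A (f (m - 1)) := by
    intro m hm
    have h2 : 1 < inDeg A (f m) := by have := hin _ hm; omega
    obtain ⟨y, hy, hyne⟩ := Set.exists_ne_of_one_lt_ncard h2 (f (m - 1))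
    have hpred : A (f (m - 1)) (f m) := by
      have := hf (m - 1)
      rwa [sub_add_cancel] at this
    have hdp : IsDominatingPair A y (f (m - 1)) := ⟨hyne, f m, hy, hpred⟩
    rcases hdeg _ _ hdp with ⟨_, h⟩ | ⟨_, h⟩
    · exact h
    · omega
  -- base case: the chord gives a dominating pair
  have hbase : a + k ≤ deg A (f i) := by
    have hne' : f i ≠ f (j - 1) := by
      intro h
      apply hne
      have := f.injective h
      rw [this]
      ring
    have hdp : IsDominatingPair A (f i) (f (j - 1)) := by
      refine ⟨hne', f j, hij, ?_⟩
      have := hf (j - 1)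
      rwa [sub_add_cancel] at this
    rcases hdeg _ _ hdp with ⟨h, _⟩ | ⟨h, _⟩
    · omega
    · exact h
  -- propagate backwards around the Hamilton cycle
  have hallt : ∀ t : ℕ, a + k ≤ deg A (f (i - t)) := by
    intro t
    induction t with
    | zero => simpa using hbase
    | succ t iht =>
      have := hstep _ iht
      have he : (i : ZMod (Fintype.card V)) - (t + 1 : ℕ) = i - t - 1 := by
        push_cast
        ring
      rwa [he]
  have hall : ∀ m : ZMod (Fintype.card V), a + k ≤ deg A (f m) := by
    intro m
    have hc : ((i - m).val : ZMod (Fintype.card V)) = i - m := by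
      simp [ZMod.natCast_val, ZMod.cast_id]
    have := hallt (i - m).val
    rwa [hc, show i - (i - m) = m by ring] at this
  -- conclude
  intro u
  have hu : a + k ≤ deg A u := by
    have := hall (f.symm u)
    rwa [f.apply_symm_apply] at this
  refine ⟨?_, hu⟩
  have hsucc : A u (f (f.symm u + 1)) := by
    have := hf (f.symm u)
    rwa [f.apply_symm_apply] at this
  have h2 : 1 < inDeg A (f (f.symm u + 1)) := by
    have := hin _ (hall (f.symm u + 1))
    omega
  obtain ⟨y, hy, hyne⟩ := Set.exists_ne_of_one_lt_ncard h2 u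
  exact ⟨y, hyne.symm, f (f.symm u + 1), hsucc, hy⟩
end

section
/- Let D be a balanced bipartite digraph of order 2a with partite sets X and Y, and suppose D has a Hamilton cycle C = [y₁,x₁,…,y_a,x_a] with x_i ∈ X, y_i ∈ Y, such that d⁺(x_i) + d⁻(y_i) ≥ a+2 for every 1 ≤ i ≤ a. Define a digraph G on vertices {v₁,…,v_a} with v_i v_j ∈ A(G) whenever i ≠ j and x_i y_j ∈ A(D). Then G is strongly connected, of order a, and d_G(v_i) ≥ a for every i. -/
open Finset Function

variable {V : Type*}

/-- the contracted digraph `G` is strongly connected of order `a`,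
with all degrees `≥ a`. -/
theorem stmt_18 {V : Type*} [Fintype V] (A : V → V → Prop) (a : ℕ) [NeZero a]
    (X Y : Set V) (hcard : Fintype.card V = 2 * a)
    (hbip : IsBipartition A X Y) (hX : X.ncard = a) (hY : Y.ncard = a)
    (x y : ZMod a → V) (hx : ∀ i, x i ∈ X) (hy : ∀ i, y i ∈ Y)
    (hxinj : Function.Injective x) (hyinj : Function.Injective y)
    (hC : ∀ i, A (y i) (x i) ∧ A (x i) (y (i + 1)))
    (hdeg : ∀ i, a + 2 ≤ outDeg A (x i) + inDeg A (y i)) :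
    StronglyConnected (fun i j : ZMod a => i ≠ j ∧ A (x i) (y j)) ∧
    Fintype.card (ZMod a) = a ∧
    (∀ i : ZMod a, a ≤ deg (fun i j : ZMod a => i ≠ j ∧ A (x i) (y j)) i) := by
  set R : ZMod a → ZMod a → Prop := fun i j => i ≠ j ∧ A (x i) (y j) with hR
  have hZcard : Fintype.card (ZMod a) = a := ZMod.card a
  -- ranges
  have hrange : ∀ (f : ZMod a → V) (S : Set V), Function.Injective f →
      (∀ i, f i ∈ S) → S.ncard = a → Set.range f = S := by
    intro f S hinj hmem hS
    apply Set.eq_of_subset_of_ncard_le (Set.range_subset_iff.mpr hmem)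
    · rw [hS, ← Set.image_univ, Set.ncard_image_of_injective _ hinj,
        Set.ncard_univ, Nat.card_eq_fintype_card, hZcard]
  have hrangey : Set.range y = Y := hrange y Y hyinj hy hY
  have hrangex : Set.range x = X := hrange x X hxinj hx hX
  have hdisj := Set.disjoint_left.mp hbip.1
  -- degree bound
  have hdegG : ∀ i : ZMod a, a ≤ deg R i := by
    intro i
    have houtD : outDeg A (x i) = {j : ZMod a | A (x i) (y j)}.ncard := by
      have himg : {v | A (x i) v} = y '' {j : ZMod a | A (x i) (y j)} := by
        ext v
        constructor
        · intro hv
          have hvY : v ∈ Set.range y := by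
            rw [hrangey]
            rcases hbip.2.2 _ _ hv with ⟨_, h⟩ | ⟨h, _⟩
            · exact h
            · exact absurd h (hdisj (hx i))
          obtain ⟨j, rfl⟩ := hvY
          exact ⟨j, hv, rfl⟩
        · rintro ⟨j, hj, rfl⟩; exact hj
      rw [outDeg, himg, Set.ncard_image_of_injective _ hyinj]
    have hinD : inDeg A (y i) = {j : ZMod a | A (x j) (y i)}.ncard := by
      have himg : {v | A v (y i)} = x '' {j : ZMod a | A (x j) (y i)} := by
        ext v
        constructor
        · intro hv
          have hvX : v ∈ Set.range x := by
            rw [hrangex]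
            rcases hbip.2.2 _ _ hv with ⟨h, h'⟩ | ⟨h, h'⟩
            · exact h
            · exact absurd (hy i) (hdisj h')
          obtain ⟨j, rfl⟩ := hvX
          exact ⟨j, hv, rfl⟩
        · rintro ⟨j, hj, rfl⟩; exact hj
      rw [inDeg, himg, Set.ncard_image_of_injective _ hxinj]
    have houtG : outDeg R i = ({j : ZMod a | A (x i) (y j)} \ {i}).ncard := by
      rw [outDeg]
      congr 1
      ext j
      simp [hR, and_comm, ne_comm, Set.mem_diff]
    have hinG : inDeg R i = ({j : ZMod a | A (x j) (y i)} \ {i}).ncard := by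
      rw [inDeg]
      congr 1
      ext j
      simp [hR, and_comm, Set.mem_diff]
    have hle : ∀ S : Set (ZMod a), S.ncard ≤ (S \ {i}).ncard + 1 := by
      intro S
      calc S.ncard ≤ (insert i (S \ {i})).ncard :=
            Set.ncard_le_ncard (fun j hj => by
              by_cases h : j = i
              · exact h ▸ Set.mem_insert _ _
              · exact Set.mem_insert_of_mem _ ⟨hj, h⟩) (Set.toFinite _)
        _ ≤ (S \ {i}).ncard + 1 := Set.ncard_insert_le _ _
    have h1 := hle {j : ZMod a | A (x i) (y j)}
    have h2 := hle {j : ZMod a | A (x j) (y i)}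
    have h3 := hdeg i
    rw [houtD, hinD] at h3
    rw [deg, houtG, hinG]
    omega
  refine ⟨?_, hZcard, hdegG⟩
  -- strong connectedness
  by_cases ha : a = 1
  · intro u v
    have : u = v := by subst ha; exact Subsingleton.elim u v
    rw [this]
  · have ha2 : 1 < a := by
      have := NeZero.ne a; omega
    haveI : Fact (1 < a) := ⟨ha2⟩
    have h10 : (1 : ZMod a) ≠ 0 := one_ne_zero
    have hstep : ∀ u : ZMod a, R u (u + 1) := by
      intro u
      refine ⟨?_, (hC u).2⟩
      intro h
      exact h10 (left_eq_add.mp h)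
    have hreach : ∀ (u : ZMod a) (n : ℕ), Relation.ReflTransGen R u (u + (n : ZMod a)) := by
      intro u n
      induction n with
      | zero => simpa using Relation.ReflTransGen.refl
      | succ n ih =>
        have := Relation.ReflTransGen.tail ih (hstep (u + (n : ZMod a)))
        simpa [add_assoc] using this
    intro u v
    have := hreach u (v - u).val
    rwa [ZMod.natCast_val, ZMod.cast_id, add_comm, sub_add_cancel] at this
end
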